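/- arXiv:2308.04307 — 5 statements merged into one kernel-verified Lean document; each statement's English description precedes it below -/
import Mathlib

section
/- Let n and g be odd integers with 3 ≤ g ≤ n, and let H = (h_0, h_1, ..., h_{n-1}) be a Hamiltonian cycle on vertex set Z_n. Then the 0-projection P_0 = (0_{h_0}, 1_{h_1}, ..., (g-1)_{h_{g-1}}, 0_{h_g}, 1_{h_{g+1}}, 0_{h_{g+2}}, 1_{h_{g+3}}, ..., 1_{h_{n-1}}) is a cycle of length n in the graph C_g[n]. -/
/-- The graph `C_g[n]`: vertex set `Z_g × Z_n`, edges `(i,x)(i+1,y)`. -/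
def cycleBlowUp (g n : ℕ) : SimpleGraph (ZMod g × ZMod n) where
  Adj p q := p.1 ≠ q.1 ∧ (p.1 = q.1 + 1 ∨ q.1 = p.1 + 1)
  symm := ⟨fun _ _ h => ⟨fun e => h.1 e.symm, h.2.symm⟩⟩
  loopless := ⟨fun _ h => h.1 rfl⟩

/-- The vertex sequence of the 0-projection of the Hamiltonian cycle
`(h 0, h 1, …, h (n-1))` onto `C_g[n]`: the `k`-th vertex is in part `k` for
`k < g`, and thereafter alternates between parts `0` and `1`. -/
def projVert (g n : ℕ) (h : Fin n → ZMod n) (k : Fin n) : ZMod g × ZMod n :=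
  (if (k : ℕ) < g then ((k : ℕ) : ZMod g)
   else if ((k : ℕ) - g) % 2 = 0 then 0 else 1, h k)

section MkWalk

variable {V : Type*} (G : SimpleGraph V)

/-- Build a walk from a function with adjacent consecutive values. -/
def mkWalk (f : ℕ → V) : ∀ m : ℕ, (∀ i, i < m → G.Adj (f i) (f (i + 1))) → G.Walk (f 0) (f m)
  | 0, _ => .nil
  | m + 1, hadj =>
      (mkWalk f m (fun i hi => hadj i (by omega))).concat (hadj m (by omega))

variable {f : ℕ → V}

@[simp] lemma mkWalk_length (m : ℕ) (hadj : ∀ i, i < m → G.Adj (f i) (f (i + 1))) :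
    (mkWalk G f m hadj).length = m := by
  induction m with
  | zero => rfl
  | succ m ih => simp [mkWalk, ih]

lemma mkWalk_getVert (m : ℕ) (hadj : ∀ i, i < m → G.Adj (f i) (f (i + 1)))
    {i : ℕ} (hi : i ≤ m) : (mkWalk G f m hadj).getVert i = f i := by
  induction m with
  | zero => simp_all [mkWalk, SimpleGraph.Walk.getVert]
  | succ m ih =>
    rw [mkWalk, SimpleGraph.Walk.concat_eq_append, SimpleGraph.Walk.getVert_append,
      mkWalk_length]
    split_ifs with hc
    · exact ih _ (by omega)
    · have hcases : i = m ∨ i = m + 1 := by omega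
      rcases hcases with rfl | rfl
      · simp [SimpleGraph.Walk.getVert]
      · have : m + 1 - m = 1 := by omega
        rw [this]
        simp [SimpleGraph.Walk.getVert]

lemma mkWalk_support (m : ℕ) (hadj : ∀ i, i < m → G.Adj (f i) (f (i + 1))) :
    (mkWalk G f m hadj).support = (List.range (m + 1)).map f := by
  induction m with
  | zero => rfl
  | succ m ih => simp [mkWalk, ih, List.range_succ]

lemma mkWalk_edges (m : ℕ) (hadj : ∀ i, i < m → G.Adj (f i) (f (i + 1))) :
    (mkWalk G f m hadj).edges = (List.range m).map (fun i => s(f i, f (i + 1))) := by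
  induction m with
  | zero => simp [mkWalk]
  | succ m ih => simp [mkWalk, ih, List.range_succ]

end MkWalk

lemma castNe {g : ℕ} (h3 : 3 ≤ g) {a b : ℕ} (ha : a < g) (hb : b < g) (hne : a ≠ b) :
    (a : ZMod g) ≠ (b : ZMod g) := by
  intro e
  apply hne
  have := congrArg ZMod.val e
  rwa [ZMod.val_natCast_of_lt ha, ZMod.val_natCast_of_lt hb] at this

/-- for odd `n, g` with `3 ≤ g ≤ n` and a Hamiltonian cycle `h` of the
complete (di)graph on `Z_n`, the 0-projection is a cycle of length `n` in `C_g[n]`. -/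
theorem stmt_7 (g n : ℕ) (hg : Odd g) (hn : Odd n) (h3 : 3 ≤ g) (hgn : g ≤ n)
    (h : Fin n → ZMod n) (hham : Function.Bijective h) :
    ∃ c : (cycleBlowUp g n).Walk
        (projVert g n h ⟨0, by omega⟩) (projVert g n h ⟨0, by omega⟩),
      c.IsCycle ∧ c.length = n ∧
      ∀ k : Fin n, c.getVert (k : ℕ) = projVert g n h k := by
  have hn3 : 3 ≤ n := le_trans h3 hgn
  have npos : 0 < n := by omega
  set G := cycleBlowUp g n with hG
  set f : ℕ → ZMod g × ZMod n := fun i => projVert g n h ⟨i % n, Nat.mod_lt _ npos⟩ with hf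
  -- second coordinate
  have fsnd : ∀ i : ℕ, (f i).2 = h ⟨i % n, Nat.mod_lt _ npos⟩ := fun i => rfl
  -- injectivity on indices mod n
  have fInj : ∀ i j : ℕ, f i = f j → i % n = j % n := by
    intro i j e
    have e2 := congrArg Prod.snd e
    rw [fsnd, fsnd] at e2
    have := hham.injective e2
    exact congrArg Fin.val this
  -- first coordinate formula
  have ffst : ∀ i : ℕ, i < n → (f i).1 =
      (if i < g then ((i : ℕ) : ZMod g) else if (i - g) % 2 = 0 then 0 else 1) := by
    intro i hi
    simp only [hf, projVert, Nat.mod_eq_of_lt hi]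
  -- adjacency
  have h01 : (0 : ZMod g) ≠ 1 := by
    have := castNe h3 (by omega : 0 < g) (by omega : 1 < g) (by omega)
    simpa using this
  have hadj : ∀ i, i < n → G.Adj (f i) (f (i + 1)) := by
    intro i hi
    have hB0 : i + 1 = n → (f (i + 1)).1 = 0 := by
      intro hin
      have hm : (i + 1) % n = 0 := by rw [hin]; exact Nat.mod_self n
      rw [hf]
      simp only [hm, projVert]
      rw [if_pos (by omega : (0 : ℕ) < g)]
      norm_num
    rcases lt_or_ge (i + 1) g with h1 | h1
    · -- both in initial segment
      have hA : (f i).1 = ((i : ℕ) : ZMod g) := by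
        rw [ffst i hi, if_pos (by omega)]
      have hB : (f (i + 1)).1 = ((i + 1 : ℕ) : ZMod g) := by
        rw [ffst (i + 1) (by omega), if_pos h1]
      refine ⟨?_, Or.inr ?_⟩
      · rw [hA, hB]; exact castNe h3 (by omega) h1 (by omega)
      · rw [hA, hB]; push_cast; ring
    · rcases eq_or_lt_of_le h1 with h2 | h2
      · -- i + 1 = g : from part g-1 to part 0
        have hA : (f i).1 = ((i : ℕ) : ZMod g) := by
          rw [ffst i hi, if_pos (by omega)]
        have hB : (f (i + 1)).1 = 0 := by
          rcases lt_or_ge (i + 1) n with h4 | h4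
          · rw [ffst (i + 1) h4, if_neg (by omega), if_pos (by omega)]
          · exact hB0 (by omega)
        have e : ((i + 1 : ℕ) : ZMod g) = 0 := by rw [← h2]; exact ZMod.natCast_self g
        refine ⟨?_, Or.inr ?_⟩
        · rw [hA, hB]
          have := castNe h3 (by omega : i < g) (by omega : 0 < g) (by omega : i ≠ 0)
          simpa using this
        · rw [hA, hB, ← e]; push_cast; ring
      · -- alternating region : g ≤ i
        have hgi : g ≤ i := by omega
        have hA := ffst i hi
        rw [if_neg (by omega)] at hA
        rcases lt_or_ge (i + 1) n with h4 | h4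
        · have hB := ffst (i + 1) h4
          rw [if_neg (by omega)] at hB
          rcases Nat.mod_two_eq_zero_or_one (i - g) with p1 | hp
          · have p2 : ¬ ((i + 1 - g) % 2 = 0) := by omega
            rw [if_pos p1] at hA
            rw [if_neg p2] at hB
            exact ⟨by rw [hA, hB]; exact h01, Or.inr (by rw [hA, hB]; ring)⟩
          · have p1 : ¬ ((i - g) % 2 = 0) := by omega
            have p2 : (i + 1 - g) % 2 = 0 := by omega
            rw [if_neg p1] at hA
            rw [if_pos p2] at hB
            exact ⟨by rw [hA, hB]; exact h01.symm, Or.inl (by rw [hA, hB]; ring)⟩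
        · -- i = n - 1, wrap around to index 0
          have hp : ¬ ((i - g) % 2 = 0) := by
            obtain ⟨a, ha⟩ := hg
            obtain ⟨b, hb⟩ := hn
            omega
          rw [if_neg hp] at hA
          have hB : (f (i + 1)).1 = 0 := hB0 (by omega)
          exact ⟨by rw [hA, hB]; exact h01.symm, Or.inl (by rw [hA, hB]; ring)⟩
  -- endpoints
  have hfin0 : (⟨0 % n, Nat.mod_lt _ npos⟩ : Fin n) = ⟨0, by omega⟩ := by
    ext; simp
  have hfinn : (⟨n % n, Nat.mod_lt _ npos⟩ : Fin n) = ⟨0, by omega⟩ := by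
    ext; simp
  have hf0 : f 0 = projVert g n h ⟨0, by omega⟩ := by
    rw [hf]; simp only; rw [hfin0]
  have hfn : f n = projVert g n h ⟨0, by omega⟩ := by
    rw [hf]; simp only; rw [hfinn]
  have hfn0 : f n = f 0 := hfn.trans hf0.symm
  let p0 : G.Walk (f 0) (f 0) := (mkWalk G f n hadj).copy rfl hfn0
  have hp0len : p0.length = n := by simp [p0, mkWalk_length]
  refine ⟨p0.copy hf0 hf0, ?_, ?_, ?_⟩
  · -- IsCycle
    rw [SimpleGraph.Walk.isCycle_copy]
    constructor
    · constructor
      · constructor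
        simp only [p0, SimpleGraph.Walk.edges_copy, mkWalk_edges]
        refine List.Nodup.map_on ?_ List.nodup_range
        intro i hi j hj e
        rw [List.mem_range] at hi hj
        rw [Sym2.eq_iff] at e
        have hmod : ∀ a b : ℕ, a < n → b ≤ n → a % n = b % n → a = b ∨ (a = 0 ∧ b = n) := by
          intro a b ha hb e
          rcases eq_or_lt_of_le hb with hb' | hb'
          · subst hb'
            rw [Nat.mod_self, Nat.mod_eq_of_lt ha] at e
            omega
          · rw [Nat.mod_eq_of_lt ha, Nat.mod_eq_of_lt hb'] at e
            omega
        rcases e with ⟨e1, _⟩ | ⟨e1, e2⟩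
        · have := fInj _ _ e1
          rw [Nat.mod_eq_of_lt hi, Nat.mod_eq_of_lt hj] at this
          exact this
        · have k1 := fInj _ _ e1
          have k2 := fInj _ _ e2
          rcases hmod i (j + 1) hi (by omega) k1 with e3 | ⟨e3, e4⟩ <;>
            rcases hmod j (i + 1) hj (by omega) k2.symm with e5 | ⟨e5, e6⟩ <;> omega
      · intro hnil
        rw [hnil] at hp0len
        simp at hp0len
        omega
    · simp only [p0, SimpleGraph.Walk.support_copy, mkWalk_support, List.range_succ_eq_map,
        List.map_cons, List.tail_cons, List.map_map]
      refine List.Nodup.map_on ?_ List.nodup_range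
      intro i hi j hj e
      rw [List.mem_range] at hi hj
      simp only [Function.comp, Nat.succ_eq_add_one] at e
      have : (i + 1) % n = (j + 1) % n := fInj _ _ e
      have hi1 : (i + 1) % n = i + 1 ∨ ((i + 1) % n = 0 ∧ i + 1 = n) := by
        rcases Nat.lt_or_ge (i + 1) n with hc | hc
        · exact Or.inl (Nat.mod_eq_of_lt hc)
        · have hc' : i + 1 = n := by omega
          exact Or.inr ⟨by rw [hc', Nat.mod_self], hc'⟩
      have hj1 : (j + 1) % n = j + 1 ∨ ((j + 1) % n = 0 ∧ j + 1 = n) := by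
        rcases Nat.lt_or_ge (j + 1) n with hc | hc
        · exact Or.inl (Nat.mod_eq_of_lt hc)
        · have hc' : j + 1 = n := by omega
          exact Or.inr ⟨by rw [hc', Nat.mod_self], hc'⟩
      rcases hi1 with e1 | ⟨e1, e1'⟩ <;> rcases hj1 with e2 | ⟨e2, e2'⟩ <;>
        rw [e1, e2] at this <;> omega
  · simpa using hp0len
  · intro k
    rw [SimpleGraph.Walk.getVert_copy, SimpleGraph.Walk.getVert_copy,
      mkWalk_getVert G n hadj (le_of_lt k.isLt)]
    rw [hf]
    simp only
    congr 1
    ext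
    simp [Nat.mod_eq_of_lt k.isLt]
end

section
/- Let g, n be odd with 3 ≤ g ≤ n and let H be a Hamiltonian cycle of the complete symmetric digraph on Z_n. The set {P_0, P_1, ..., P_{g-1}} of i-projections of H onto C_g[n] (where P_i is obtained from P_0 by adding i mod g to the first coordinate of every vertex) forms a spanning 2-regular subgraph of C_g[n] whose components are all cycles of length n. -/
/-- The `k`-th vertex of the `i`-projection of the Hamiltonian cycle
`(h 0, h 1, …, h (n-1))` onto `C_g[n]` (the 0-projection shifted by `i` in the
first coordinate). -/
def projVertI (g n : ℕ) (h : ZMod n → ZMod n) (i : ZMod g) (k : ZMod n) :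
    ZMod g × ZMod n :=
  ((if (k.val : ℕ) < g then ((k.val : ℕ) : ZMod g)
     else if (k.val - g) % 2 = 0 then 0 else 1) + i, h k)

/-- The union of the `i`-projections of `h`, as a graph on `Z_g × Z_n`:
two vertices are adjacent iff they are consecutive on some `i`-projection. -/
def projGraph (g n : ℕ) (h : ZMod n → ZMod n) : SimpleGraph (ZMod g × ZMod n) where
  Adj p q := p ≠ q ∧ ∃ (i : ZMod g) (k : ZMod n),
    (p = projVertI g n h i k ∧ q = projVertI g n h i (k + 1)) ∨
    (q = projVertI g n h i k ∧ p = projVertI g n h i (k + 1))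
  symm := by
    constructor
    intro p q ⟨hpq, i, k, hk⟩
    exact ⟨hpq.symm, i, k, hk.symm⟩
  loopless := ⟨fun _ h => h.1 rfl⟩

/-! Auxiliary definitions and lemmas -/

def fMap (g n : ℕ) (k : ZMod n) : ZMod g :=
  if (k.val : ℕ) < g then ((k.val : ℕ) : ZMod g)
  else if (k.val - g) % 2 = 0 then 0 else 1

theorem projVertI_eq (g n : ℕ) (h : ZMod n → ZMod n) (i : ZMod g) (k : ZMod n) :
    projVertI g n h i k = (fMap g n k + i, h k) := rfl

theorem fstep (g n : ℕ) (hg : Odd g) (hn : Odd n) (h3 : 3 ≤ g) (hgn : g ≤ n) (k : ZMod n) :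
    (fMap g n (k + 1) = fMap g n k + 1 ∨ fMap g n k = fMap g n (k + 1) + 1) ∧
      fMap g n (k + 1) ≠ fMap g n k := by
  haveI : NeZero n := ⟨by omega⟩
  haveI : NeZero g := ⟨by omega⟩
  haveI : Fact (1 < g) := ⟨by omega⟩
  set a := k.val with ha
  have halt : a < n := ZMod.val_lt k
  have hk1 : k + 1 = ((a + 1 : ℕ) : ZMod n) := by
    rw [Nat.cast_add, Nat.cast_one, ZMod.natCast_zmod_val]
  have hgm1 : ((g - 1 : ℕ) : ZMod g) ≠ 0 := by
    intro H
    have := congrArg ZMod.val H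
    rw [ZMod.val_natCast, Nat.mod_eq_of_lt (by omega), ZMod.val_zero] at this
    omega
  have hgm1' : ((g - 1 : ℕ) : ZMod g) + 1 = 0 := by
    have H : (((g - 1) + 1 : ℕ) : ZMod g) = 0 := by
      rw [show g - 1 + 1 = g by omega, ZMod.natCast_self]
    rw [Nat.cast_add, Nat.cast_one] at H
    exact H
  by_cases hend : a + 1 = n
  · -- wrap around
    have hk10 : k + 1 = 0 := by rw [hk1, hend, ZMod.natCast_self]
    have hB : fMap g n (k + 1) = 0 := by
      rw [hk10]; simp [fMap, ZMod.val_zero, show 0 < g by omega]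
    rw [hB]
    by_cases hag : a < g
    · have hgeq : g = n := by omega
      have hA : fMap g n k = ((g - 1 : ℕ) : ZMod g) := by
        simp only [fMap, ← ha, if_pos hag]; congr 1; omega
      rw [hA]
      exact ⟨Or.inl hgm1'.symm, fun e => hgm1 e.symm⟩
    · have hA : fMap g n k = 1 := by
        simp only [fMap, ← ha, if_neg hag]
        rw [if_neg]
        obtain ⟨p, hp⟩ := hn; obtain ⟨q, hq⟩ := hg
        omega
      rw [hA]
      exact ⟨Or.inr (zero_add 1).symm, zero_ne_one⟩
  · have hBval : (k + 1).val = a + 1 := by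
      rw [hk1, ZMod.val_natCast, Nat.mod_eq_of_lt (by omega)]
    by_cases h1 : a + 1 < g
    · have hA : fMap g n k = (a : ZMod g) := by simp only [fMap, ← ha, if_pos (by omega : a < g)]
      have hB : fMap g n (k + 1) = ((a + 1 : ℕ) : ZMod g) := by
        simp only [fMap, hBval, if_pos h1]
      rw [hA, hB]
      constructor
      · left; push_cast; ring
      · intro H
        have := congrArg ZMod.val H
        rw [ZMod.val_natCast, ZMod.val_natCast, Nat.mod_eq_of_lt h1,
          Nat.mod_eq_of_lt (by omega)] at this
        omega
    · by_cases h2 : a < g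
      · -- a = g - 1
        have hA : fMap g n k = ((g - 1 : ℕ) : ZMod g) := by
          simp only [fMap, ← ha, if_pos h2]; congr 1; omega
        have hB : fMap g n (k + 1) = 0 := by
          simp only [fMap, hBval, if_neg h1]
          rw [if_pos (by omega)]
        rw [hA, hB]
        exact ⟨Or.inl hgm1'.symm, fun e => hgm1 e.symm⟩
      · have hag : g ≤ a := by omega
        by_cases hpar : (a - g) % 2 = 0
        · have hA : fMap g n k = 0 := by simp only [fMap, ← ha, if_neg h2, if_pos hpar]
          have hB : fMap g n (k + 1) = 1 := by
            simp only [fMap, hBval, if_neg (by omega : ¬ a + 1 < g)]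
            rw [if_neg (by omega)]
          rw [hA, hB]
          exact ⟨Or.inl (zero_add 1).symm, one_ne_zero⟩
        · have hA : fMap g n k = 1 := by simp only [fMap, ← ha, if_neg h2, if_neg hpar]
          have hB : fMap g n (k + 1) = 0 := by
            simp only [fMap, hBval, if_neg (by omega : ¬ a + 1 < g)]
            rw [if_pos (by omega)]
          rw [hA, hB]
          exact ⟨Or.inr (zero_add 1).symm, zero_ne_one⟩

theorem projVertI_inj (g n : ℕ) (h : ZMod n → ZMod n) (hinj : Function.Injective h)
    {a c : ZMod g} {b d : ZMod n} (H : projVertI g n h a b = projVertI g n h c d) :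
    a = c ∧ b = d := by
  rw [projVertI_eq, projVertI_eq, Prod.mk.injEq] at H
  obtain ⟨h1, h2⟩ := H
  obtain rfl := hinj h2
  exact ⟨add_left_cancel h1, rfl⟩

theorem projVertI_surj (g n : ℕ) (h : ZMod n → ZMod n) (hbij : Function.Bijective h)
    [NeZero g] [NeZero n] (v : ZMod g × ZMod n) :
    ∃ i k, v = projVertI g n h i k := by
  have hi : Function.Injective (fun x : ZMod g × ZMod n => projVertI g n h x.1 x.2) := by
    intro x y H
    obtain ⟨h1, h2⟩ := projVertI_inj g n h hbij.injective H
    exact Prod.ext h1 h2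
  obtain ⟨⟨i, k⟩, hik⟩ := Finite.surjective_of_injective hi v
  exact ⟨i, k, hik.symm⟩

theorem projGraph_adj (g n : ℕ) (h : ZMod n → ZMod n) (p q : ZMod g × ZMod n) :
    (projGraph g n h).Adj p q ↔ p ≠ q ∧ ∃ (i : ZMod g) (k : ZMod n),
      (p = projVertI g n h i k ∧ q = projVertI g n h i (k + 1)) ∨
      (q = projVertI g n h i k ∧ p = projVertI g n h i (k + 1)) := Iff.rfl

theorem cycleBlowUp_adj (g n : ℕ) (p q : ZMod g × ZMod n) :
    (cycleBlowUp g n).Adj p q ↔ p.1 ≠ q.1 ∧ (p.1 = q.1 + 1 ∨ q.1 = p.1 + 1) := Iff.rfl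

theorem adj_step (g n : ℕ) (h : ZMod n → ZMod n) (h3 : 3 ≤ g) (h3n : 3 ≤ n)
    (hinj : Function.Injective h) (i : ZMod g) (k : ZMod n) :
    (projGraph g n h).Adj (projVertI g n h i k) (projVertI g n h i (k + 1)) := by
  haveI : NeZero n := ⟨by omega⟩
  haveI : Fact (1 < n) := ⟨by omega⟩
  rw [projGraph_adj]
  refine ⟨?_, i, k, Or.inl ⟨rfl, rfl⟩⟩
  intro hEq
  obtain ⟨-, h2⟩ := projVertI_inj g n h hinj hEq
  exact one_ne_zero (left_eq_add.mp h2)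

theorem adj_iff (g n : ℕ) (h : ZMod n → ZMod n) (h3 : 3 ≤ g) (h3n : 3 ≤ n)
    (hinj : Function.Injective h) (a c : ZMod g) (b d : ZMod n) :
    (projGraph g n h).Adj (projVertI g n h a b) (projVertI g n h c d) ↔
      a = c ∧ (d = b + 1 ∨ b = d + 1) := by
  rw [projGraph_adj]
  constructor
  · rintro ⟨hne, i, k, ⟨hp, hq⟩ | ⟨hq, hp⟩⟩
    · obtain ⟨e1, e2⟩ := projVertI_inj g n h hinj hp
      obtain ⟨e3, e4⟩ := projVertI_inj g n h hinj hq
      exact ⟨e1.trans e3.symm, Or.inl (by rw [e4, e2])⟩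
    · obtain ⟨e1, e2⟩ := projVertI_inj g n h hinj hp
      obtain ⟨e3, e4⟩ := projVertI_inj g n h hinj hq
      exact ⟨e1.trans e3.symm, Or.inr (by rw [e4, e2])⟩
  · rintro ⟨h1, h2 | h2⟩
    · rw [h1, h2]
      exact adj_step g n h h3 h3n hinj c b
    · rw [h2, h1]
      exact (adj_step g n h h3 h3n hinj c d).symm

def projWalk (g n : ℕ) (h : ZMod n → ZMod n) (i : ZMod g)
    (A : ∀ k : ZMod n, (projGraph g n h).Adj (projVertI g n h i k) (projVertI g n h i (k + 1))) :
    (m : ℕ) → (k : ZMod n) →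
      (projGraph g n h).Walk (projVertI g n h i k) (projVertI g n h i (k + m))
  | 0, k => SimpleGraph.Walk.nil.copy rfl (by rw [Nat.cast_zero, add_zero])
  | m + 1, k =>
    SimpleGraph.Walk.cons (A k)
      ((projWalk g n h i A m (k + 1)).copy rfl
        (congrArg (projVertI g n h i) (by push_cast; ring)))

theorem projWalk_length (g n : ℕ) (h : ZMod n → ZMod n) (i : ZMod g)
    (A : ∀ k : ZMod n, (projGraph g n h).Adj (projVertI g n h i k) (projVertI g n h i (k + 1))) :
    ∀ (m : ℕ) (k : ZMod n), (projWalk g n h i A m k).length = m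
  | 0, k => by simp [projWalk]
  | m + 1, k => by simp [projWalk, projWalk_length g n h i A m (k + 1)]

theorem projWalk_support (g n : ℕ) (h : ZMod n → ZMod n) (i : ZMod g)
    (A : ∀ k : ZMod n, (projGraph g n h).Adj (projVertI g n h i k) (projVertI g n h i (k + 1))) :
    ∀ (m : ℕ) (k : ZMod n), (projWalk g n h i A m k).support =
      (List.range (m + 1)).map (fun j : ℕ => projVertI g n h i (k + (j : ZMod n)))
  | 0, k => by
    simp only [projWalk, SimpleGraph.Walk.support_copy, SimpleGraph.Walk.support_nil,
      show List.range 1 = [0] from rfl, List.map_cons, List.map_nil]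
    rw [Nat.cast_zero, add_zero]
  | m + 1, k => by
    have hfun : (fun j : ℕ => projVertI g n h i (k + 1 + j)) =
        (fun j : ℕ => projVertI g n h i (k + ((j + 1 : ℕ) : ZMod n))) := by
      funext j
      rw [show k + 1 + (j : ZMod n) = k + ((j + 1 : ℕ) : ZMod n) by push_cast; ring]
    simp only [projWalk, SimpleGraph.Walk.support_cons, SimpleGraph.Walk.support_copy]
    rw [projWalk_support g n h i A m (k + 1), hfun, List.range_succ_eq_map (n := m + 1),
      List.map_cons, List.map_map]
    refine congrArg₂ List.cons ?_ rfl
    rw [Nat.cast_zero, add_zero]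

theorem projWalk_edges (g n : ℕ) (h : ZMod n → ZMod n) (i : ZMod g)
    (A : ∀ k : ZMod n, (projGraph g n h).Adj (projVertI g n h i k) (projVertI g n h i (k + 1))) :
    ∀ (m : ℕ) (k : ZMod n), (projWalk g n h i A m k).edges =
      (List.range m).map (fun j : ℕ => s(projVertI g n h i (k + (j : ZMod n)), projVertI g n h i (k + (j : ZMod n) + 1)))
  | 0, k => by simp [projWalk]
  | m + 1, k => by
    have hfun : (fun j : ℕ => s(projVertI g n h i (k + 1 + j), projVertI g n h i (k + 1 + j + 1))) =
        (fun j : ℕ => s(projVertI g n h i (k + ((j + 1 : ℕ) : ZMod n)),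
          projVertI g n h i (k + ((j + 1 : ℕ) : ZMod n) + 1))) := by
      funext j
      rw [show k + 1 + (j : ZMod n) = k + ((j + 1 : ℕ) : ZMod n) by push_cast; ring]
    simp only [projWalk, SimpleGraph.Walk.edges_cons, SimpleGraph.Walk.edges_copy]
    rw [projWalk_edges g n h i A m (k + 1), hfun, List.range_succ_eq_map (n := m),
      List.map_cons, List.map_map]
    refine congrArg₂ List.cons ?_ rfl
    rw [Nat.cast_zero, add_zero]

theorem reach_fiber (g n : ℕ) (h : ZMod n → ZMod n) (hinj : Function.Injective h)
    {i : ZMod g} {u w : ZMod g × ZMod n} (p : (projGraph g n h).Walk u w) :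
    (∃ l, u = projVertI g n h i l) → ∃ l, w = projVertI g n h i l := by
  induction p with
  | nil => exact id
  | cons hadj p ih =>
    rintro ⟨l, rfl⟩
    apply ih
    rw [projGraph_adj] at hadj
    obtain ⟨hne, i', k', ⟨hp, hq⟩ | ⟨hq, hp⟩⟩ := hadj
    · obtain ⟨e1, e2⟩ := projVertI_inj g n h hinj hp
      exact ⟨k' + 1, by rw [hq, e1]⟩
    · obtain ⟨e1, e2⟩ := projVertI_inj g n h hinj hp
      exact ⟨k', by rw [hq, e1]⟩

/-- for odd `g, n` with `3 ≤ g ≤ n` and a Hamiltonian cycle `h` of the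
complete symmetric digraph on `Z_n`, the union of the `i`-projections of `h` onto
`C_g[n]` is a spanning 2-regular subgraph of `C_g[n]` all of whose connected
components are cycles of length `n`. -/
theorem stmt_8 (g n : ℕ) (hg : Odd g) (hn : Odd n) (h3 : 3 ≤ g) (hgn : g ≤ n)
    (h : ZMod n → ZMod n) (hham : Function.Bijective h) :
    projGraph g n h ≤ cycleBlowUp g n ∧
    (∀ v : ZMod g × ZMod n, ((projGraph g n h).neighborSet v).ncard = 2) ∧
    (∀ v : ZMod g × ZMod n, ∃ c : (projGraph g n h).Walk v v,
      c.IsCycle ∧ c.length = n ∧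
      ∀ w, (projGraph g n h).Reachable v w ↔ w ∈ c.support) := by
  have h3n : 3 ≤ n := le_trans h3 hgn
  haveI : NeZero n := ⟨by omega⟩
  haveI : NeZero g := ⟨by omega⟩
  have hinj := hham.injective
  have hdvd2 : ¬ ((2 : ℕ) : ZMod n) = 0 := by
    intro h2
    rw [ZMod.natCast_eq_zero_iff] at h2
    have := Nat.le_of_dvd (by omega) h2
    omega
  refine ⟨?_, ?_, ?_⟩
  · -- subgraph of cycleBlowUp
    have key : ∀ (i : ZMod g) (k : ZMod n),
        (cycleBlowUp g n).Adj (projVertI g n h i k) (projVertI g n h i (k + 1)) := by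
      intro i k
      obtain ⟨hor, hne'⟩ := fstep g n hg hn h3 hgn k
      rw [cycleBlowUp_adj]
      constructor
      · intro H
        simp only [projVertI_eq] at H
        exact hne' (add_right_cancel H).symm
      · rcases hor with hh | hh
        · right; simp only [projVertI_eq]; rw [hh]; ring
        · left; simp only [projVertI_eq]; rw [hh]; ring
    intro p q
    rw [projGraph_adj]
    rintro ⟨hne, i, k, ⟨rfl, rfl⟩ | ⟨rfl, rfl⟩⟩
    · exact key i k
    · exact (key i k).symm
  · -- 2-regular
    intro v
    obtain ⟨i, k, rfl⟩ := projVertI_surj g n h hham v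
    have hset : (projGraph g n h).neighborSet (projVertI g n h i k) =
        {projVertI g n h i (k + 1), projVertI g n h i (k - 1)} := by
      ext w
      obtain ⟨i', l, rfl⟩ := projVertI_surj g n h hham w
      simp only [SimpleGraph.mem_neighborSet, Set.mem_insert_iff, Set.mem_singleton_iff]
      rw [adj_iff g n h h3 h3n hinj]
      constructor
      · rintro ⟨rfl, hl | hl⟩
        · left; rw [hl]
        · right; rw [(eq_sub_iff_add_eq).mpr hl.symm]
      · rintro (he | he) <;> obtain ⟨e1, e2⟩ := projVertI_inj g n h hinj he
        · exact ⟨e1.symm, Or.inl e2⟩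
        · exact ⟨e1.symm, Or.inr (by rw [e2]; ring)⟩
    rw [hset]
    apply Set.ncard_pair
    intro He
    obtain ⟨-, e2⟩ := projVertI_inj g n h hinj He
    exact hdvd2 (by push_cast; linear_combination e2)
  · -- cycles
    intro v
    obtain ⟨i, k, rfl⟩ := projVertI_surj g n h hham v
    have Ai : ∀ l : ZMod n, (projGraph g n h).Adj (projVertI g n h i l)
        (projVertI g n h i (l + 1)) := adj_step g n h h3 h3n hinj i
    set N := n - 1 with hNdef
    have hN : N + 1 = n := by omega
    have hcast0 : ((N + 1 : ℕ) : ZMod n) = 0 := by rw [hN, ZMod.natCast_self]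
    have hcopy : projVertI g n h i (k + ((N + 1 : ℕ) : ZMod n)) = projVertI g n h i k :=
      congrArg _ (by rw [hcast0, add_zero])
    have castval : ∀ x : ℕ, x < n → ((x : ZMod n)).val = x := fun x hx => by
      rw [ZMod.val_natCast, Nat.mod_eq_of_lt hx]
    refine ⟨(projWalk g n h i Ai (N + 1) k).copy rfl hcopy, ?_, ?_, ?_⟩
    · -- IsCycle
      simp only [projWalk, SimpleGraph.Walk.copy_cons, SimpleGraph.Walk.copy_copy]
      rw [SimpleGraph.Walk.cons_isCycle_iff]
      constructor
      · rw [SimpleGraph.Walk.isPath_copy, SimpleGraph.Walk.isPath_def,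
          projWalk_support g n h i Ai N (k + 1)]
        apply List.Nodup.map_on _ List.nodup_range
        intro x hx y hy hxy
        rw [List.mem_range] at hx hy
        obtain ⟨-, e2⟩ := projVertI_inj g n h hinj hxy
        have hxy' : ((x : ℕ) : ZMod n) = ((y : ℕ) : ZMod n) := by linear_combination e2
        have := congrArg ZMod.val hxy'
        rw [castval x (by omega), castval y (by omega)] at this
        exact this
      · rw [SimpleGraph.Walk.edges_copy, projWalk_edges g n h i Ai N (k + 1)]
        intro hmem
        rw [List.mem_map] at hmem
        obtain ⟨j, hj, hEq⟩ := hmem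
        rw [List.mem_range] at hj
        rw [Sym2.eq_iff] at hEq
        rcases hEq with ⟨ha, -⟩ | ⟨ha, hb⟩
        · obtain ⟨-, e2⟩ := projVertI_inj g n h hinj ha
          have : ((j + 1 : ℕ) : ZMod n) = 0 := by push_cast; linear_combination e2
          rw [ZMod.natCast_eq_zero_iff] at this
          have := Nat.le_of_dvd (by omega) this
          omega
        · obtain ⟨-, e3⟩ := projVertI_inj g n h hinj ha
          have hj0 : ((j : ℕ) : ZMod n) = 0 := by linear_combination e3
          obtain ⟨-, e2⟩ := projVertI_inj g n h hinj hb
          refine hdvd2 ?_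
          push_cast
          linear_combination e2 - hj0
    · rw [SimpleGraph.Walk.length_copy, projWalk_length]
      omega
    · intro w
      constructor
      · rintro ⟨p⟩
        obtain ⟨l, rfl⟩ := reach_fiber g n h hinj p ⟨k, rfl⟩
        rw [SimpleGraph.Walk.support_copy, projWalk_support g n h i Ai (N + 1) k,
          List.mem_map]
        refine ⟨(l - k).val, List.mem_range.mpr ?_, ?_⟩
        · have := ZMod.val_lt (l - k)
          omega
        · rw [ZMod.natCast_zmod_val]
          exact congrArg _ (by ring)
      · intro hw
        rw [SimpleGraph.Walk.mem_support_iff_exists_append] at hw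
        obtain ⟨q, r, -⟩ := hw
        exact ⟨q⟩
end

section
/- If a 2-regular graph H of order v admits a graceful labelling, i.e., there is a copy F of H with vertex set {0,1,...,v-1} ∪ {∞} whose list of differences ΔF equals ±{1,...,v-1} (each nonzero residue mod v appearing exactly twice after reduction), then reducing the vertex labels of F modulo v yields a twofold 2-starter of Z_v, and hence a 1-rotational solution to OP(2K_v; H). -/
/-- Translation of a vertex of `G ∪ {∞}` (encoded as `Option G`, `none = ∞`). -/
def trVert {G : Type*} [AddGroup G] (g : G) : Option G → Option G :=
  Option.map (· + g)

/-- The translate `H + g` of a graph `H` on `G ∪ {∞}`. -/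
def translateGraph {G : Type*} [AddGroup G] (g : G)
    (H : SimpleGraph (Option G)) : SimpleGraph (Option G) where
  Adj u v := H.Adj (trVert (-g) u) (trVert (-g) v)
  symm := ⟨fun _ _ h => SimpleGraph.Adj.symm h⟩
  loopless := ⟨fun _ h => H.loopless.irrefl _ h⟩

/-- The natural injection `{0, …, v-1} ∪ {∞} ↪ Z_v ∪ {∞}` reducing labels mod `v`. -/
def reduceVert (v : ℕ) [NeZero v] : Option (Fin v) ↪ Option (ZMod v) :=
  Function.Embedding.optionMap
    ⟨fun x => ((x : ℕ) : ZMod v), by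
      intro a b hab
      have ha : (((a : ℕ) : ZMod v)).val = (a : ℕ) := ZMod.val_cast_of_lt a.isLt
      have hb : (((b : ℕ) : ZMod v)).val = (b : ℕ) := ZMod.val_cast_of_lt b.isLt
      simp only at hab
      exact Fin.ext (by rw [← ha, ← hb, hab])⟩

section Aux
variable {v : ℕ} [NeZero v]

private def cfn (a : Fin v) : ZMod v := ((a : ℕ) : ZMod v)

private lemma cfn_inj : Function.Injective (cfn (v := v)) := by
  intro a b hab
  have ha := ZMod.val_cast_of_lt a.isLt
  have hb := ZMod.val_cast_of_lt b.isLt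
  exact Fin.ext (by rw [← ha, ← hb]; exact congrArg ZMod.val hab)

private def cEquiv : Fin v ≃ ZMod v where
  toFun := cfn
  invFun x := ⟨x.val, x.val_lt⟩
  left_inv a := Fin.ext (ZMod.val_cast_of_lt a.isLt)
  right_inv x := ZMod.natCast_zmod_val x

private lemma reduceVert_apply_some (a : Fin v) :
    reduceVert v (some a) = some (cfn a) := rfl

private lemma reduceVert_apply_none :
    reduceVert v none = (none : Option (ZMod v)) := rfl

private lemma adj_map_some (F : SimpleGraph (Option (Fin v))) (p q : ZMod v) :
    (F.map (reduceVert v)).Adj (some p) (some q) ↔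
    ∃ a b : Fin v, F.Adj (some a) (some b) ∧ cfn a = p ∧ cfn b = q := by
  rw [SimpleGraph.map_adj]
  constructor
  · rintro ⟨u, w, hadj, hu, hw⟩
    cases u with
    | none => exact absurd hu (by simp [reduceVert_apply_none])
    | some a =>
      cases w with
      | none => exact absurd hw (by simp [reduceVert_apply_none])
      | some b =>
        rw [reduceVert_apply_some, Option.some_inj] at hu hw
        exact ⟨a, b, hadj, hu, hw⟩
  · rintro ⟨a, b, hadj, hp, hq⟩
    exact ⟨some a, some b, hadj, by rw [reduceVert_apply_some, hp],
      by rw [reduceVert_apply_some, hq]⟩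

private lemma adj_map_none (F : SimpleGraph (Option (Fin v))) (q : ZMod v) :
    (F.map (reduceVert v)).Adj none (some q) ↔
    ∃ b : Fin v, F.Adj none (some b) ∧ cfn b = q := by
  rw [SimpleGraph.map_adj]
  constructor
  · rintro ⟨u, w, hadj, hu, hw⟩
    cases u with
    | some a => exact absurd hu (by simp [reduceVert_apply_some])
    | none =>
      cases w with
      | none => exact absurd hw (by simp [reduceVert_apply_none])
      | some b =>
        rw [reduceVert_apply_some, Option.some_inj] at hw
        exact ⟨b, hadj, hw⟩
  · rintro ⟨b, hadj, hq⟩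
    exact ⟨none, some b, hadj, rfl, by rw [reduceVert_apply_some, hq]⟩

end Aux

section Aux2
variable {v : ℕ} [NeZero v]

private lemma cast_diff (a b : Fin v) :
    cfn a - cfn b = (((((a : ℕ) : ℤ)) - (((b : ℕ) : ℤ)) : ℤ) : ZMod v) := by
  simp only [cfn]
  push_cast
  ring

private lemma part1 (F : SimpleGraph (Option (Fin v)))
    (hgraceful : ∀ k : ℤ, 1 ≤ k → k ≤ (v : ℤ) - 1 →
      {p : Fin v × Fin v | F.Adj (some p.1) (some p.2) ∧
        ((p.1 : ℕ) : ℤ) - ((p.2 : ℕ) : ℤ) = k}.ncard = 1)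
    (d : ZMod v) (hd : d ≠ 0) :
    {p : ZMod v × ZMod v |
      (F.map (reduceVert v)).Adj (some p.1) (some p.2) ∧ p.1 - p.2 = d}.ncard = 2 := by
  set k : ℕ := d.val with hkdef
  have hk1 : 1 ≤ k := ZMod.val_pos.mpr hd
  have hkv : k < v := d.val_lt
  have hkd : ((k : ℕ) : ZMod v) = d := ZMod.natCast_zmod_val d
  set T : Set (Fin v × Fin v) :=
    {ab | F.Adj (some ab.1) (some ab.2) ∧ cfn ab.1 - cfn ab.2 = d} with hT
  set A : Set (Fin v × Fin v) :=
    {p | F.Adj (some p.1) (some p.2) ∧ ((p.1 : ℕ) : ℤ) - ((p.2 : ℕ) : ℤ) = (k : ℤ)} with hA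
  set B : Set (Fin v × Fin v) :=
    {p | F.Adj (some p.1) (some p.2) ∧ ((p.1 : ℕ) : ℤ) - ((p.2 : ℕ) : ℤ) = (k : ℤ) - v} with hB
  set A' : Set (Fin v × Fin v) :=
    {p | F.Adj (some p.1) (some p.2) ∧ ((p.1 : ℕ) : ℤ) - ((p.2 : ℕ) : ℤ) = (v : ℤ) - k} with hA'
  have himg : {p : ZMod v × ZMod v |
      (F.map (reduceVert v)).Adj (some p.1) (some p.2) ∧ p.1 - p.2 = d}
      = (Prod.map cfn cfn) '' T := by
    ext p
    constructor
    · rintro ⟨hadj, hdiff⟩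
      rcases (adj_map_some F p.1 p.2).mp hadj with ⟨a, b, hab, ha, hb⟩
      exact ⟨(a, b), ⟨hab, by rw [ha, hb]; exact hdiff⟩, by simp [Prod.map, ha, hb]⟩
    · rintro ⟨⟨a, b⟩, ⟨hab, hdiff⟩, hp⟩
      cases hp
      exact ⟨(adj_map_some F _ _).mpr ⟨a, b, hab, rfl, rfl⟩, hdiff⟩
  have hmapinj : Function.Injective (Prod.map cfn cfn : Fin v × Fin v → ZMod v × ZMod v) :=
    Function.Injective.prodMap cfn_inj cfn_inj
  rw [himg, Set.ncard_image_of_injective _ hmapinj]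
  have hTAB : T = A ∪ B := by
    ext ⟨a, b⟩
    simp only [hT, hA, hB, Set.mem_setOf_eq, Set.mem_union]
    constructor
    · rintro ⟨hab, hdiff⟩
      rw [cast_diff, ← hkd] at hdiff
      have hdvd : (v : ℤ) ∣ ((((a : ℕ) : ℤ)) - (((b : ℕ) : ℤ)) - k) := by
        rw [← ZMod.intCast_zmod_eq_zero_iff_dvd]
        push_cast at hdiff ⊢
        linear_combination hdiff
      rcases hdvd with ⟨m, hm⟩
      have ha' : (a : ℕ) < v := a.isLt
      have hb' : (b : ℕ) < v := b.isLt
      have hm0 : m = 0 ∨ m = -1 := by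
        have h1 : (v : ℤ) * m ≤ (v : ℤ) - 1 - k := by omega
        have h2 : -(v : ℤ) + 1 - k ≤ (v : ℤ) * m := by omega
        have hv1 : (1 : ℤ) ≤ v := by exact_mod_cast Nat.one_le_iff_ne_zero.mpr (NeZero.ne v)
        have hmle : m ≤ 0 := by nlinarith
        have hmge : -1 ≤ m := by nlinarith
        omega
      rcases hm0 with h | h
      · rw [h] at hm
        left; exact ⟨hab, by omega⟩
      · rw [h] at hm
        right; exact ⟨hab, by omega⟩
    · rintro (⟨hab, hdiff⟩ | ⟨hab, hdiff⟩)
      · refine ⟨hab, ?_⟩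
        rw [cast_diff, hdiff, ← hkd]
        push_cast
        ring
      · refine ⟨hab, ?_⟩
        rw [cast_diff, hdiff, ← hkd]
        push_cast
        rw [ZMod.natCast_self]
        ring
  have hdisj : Disjoint A B := by
    rw [Set.disjoint_left]
    rintro ⟨a, b⟩ h1 h2
    simp only [hA, hB, Set.mem_setOf_eq] at h1 h2
    have hv1 : 1 ≤ v := Nat.one_le_iff_ne_zero.mpr (NeZero.ne v)
    obtain ⟨-, e1⟩ := h1
    obtain ⟨-, e2⟩ := h2
    omega
  have hAcard : A.ncard = 1 := hgraceful k (by exact_mod_cast hk1) (by omega)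
  have hBcard : B.ncard = 1 := by
    have hswap : B = Prod.swap ⁻¹' A' := by
      ext ⟨a, b⟩
      simp only [hB, hA', Set.mem_preimage, Prod.swap_prod_mk, Set.mem_setOf_eq]
      constructor
      · rintro ⟨hab, hdiff⟩; exact ⟨hab.symm, by omega⟩
      · rintro ⟨hab, hdiff⟩; exact ⟨hab.symm, by omega⟩
    rw [hswap, ← Set.image_swap_eq_preimage_swap,
      Set.ncard_image_of_injective _ Prod.swap_injective]
    exact hgraceful ((v : ℤ) - k) (by omega) (by omega)
  rw [hTAB, Set.ncard_union_eq hdisj (Set.toFinite A) (Set.toFinite B), hAcard, hBcard]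

end Aux2

section Aux3
variable {v : ℕ} [NeZero v]

private lemma reduceVert_eq :
    reduceVert v = (Equiv.optionCongr (cEquiv (v := v))).toEmbedding := by
  ext x
  cases x <;> rfl

private def isoMapF (F : SimpleGraph (Option (Fin v))) : F.map (reduceVert v) ≃g F := by
  rw [reduceVert_eq]
  exact (SimpleGraph.Iso.map (Equiv.optionCongr cEquiv) F).symm

private def isoTranslate (g : ZMod v) (H : SimpleGraph (Option (ZMod v))) :
    translateGraph g H ≃g H where
  toEquiv := Equiv.optionCongr (Equiv.addRight (-g))
  map_rel_iff' := by
    intro a b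
    have h : ∀ x : Option (ZMod v),
        (Equiv.optionCongr (Equiv.addRight (-g))) x = trVert (-g) x := by
      intro x; cases x <;> simp [trVert]
    rw [h, h]
    exact Iff.rfl

private lemma ncard_none (F : SimpleGraph (Option (Fin v)))
    (h2 : (F.neighborSet none).ncard = 2) :
    {z : ZMod v | (F.map (reduceVert v)).Adj none (some z)}.ncard = 2 := by
  have h1 : {z : ZMod v | (F.map (reduceVert v)).Adj none (some z)}
      = cfn '' {b : Fin v | F.Adj none (some b)} := by
    ext z
    simp only [Set.mem_setOf_eq, Set.mem_image]
    rw [adj_map_none]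
  rw [h1, Set.ncard_image_of_injective _ cfn_inj]
  have h3 : F.neighborSet none = some '' {b : Fin v | F.Adj none (some b)} := by
    ext w
    cases w with
    | none => simp [SimpleGraph.mem_neighborSet]
    | some b => simp [SimpleGraph.mem_neighborSet]
  rw [h3, Set.ncard_image_of_injective _ (Option.some_injective _)] at h2
  exact h2

end Aux3


/-- if a 2-regular graph `H` of order `v` has a graceful labelling
`F` on vertex set `{0,…,v-1} ∪ {∞}` (each difference `k` with `1 ≤ k ≤ v-1`
realized exactly once in each direction), then reducing labels mod `v` yields a
twofold 2-starter of `Z_v`, and hence the development of the reduced graph is a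
1-rotational solution to `OP(2K_v; H)`: every pair of distinct vertices lies in
exactly two translates, each translate being isomorphic to `F`. -/
theorem stmt_13 (v : ℕ) [NeZero v]
    (F : SimpleGraph (Option (Fin v)))
    (h2 : ∀ u : Option (Fin v), (F.neighborSet u).ncard = 2)
    (hgraceful : ∀ k : ℤ, 1 ≤ k → k ≤ (v : ℤ) - 1 →
      {p : Fin v × Fin v | F.Adj (some p.1) (some p.2) ∧
        ((p.1 : ℕ) : ℤ) - ((p.2 : ℕ) : ℤ) = k}.ncard = 1) :
    (∀ d : ZMod v, d ≠ 0 →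
      {p : ZMod v × ZMod v |
        (F.map (reduceVert v)).Adj (some p.1) (some p.2) ∧ p.1 - p.2 = d}.ncard = 2) ∧
    (∀ u w : Option (ZMod v), u ≠ w →
      {g : ZMod v | (translateGraph g (F.map (reduceVert v))).Adj u w}.ncard = 2) ∧
    (∀ g : ZMod v, Nonempty (translateGraph g (F.map (reduceVert v)) ≃g F)) := by
  set H := F.map (reduceVert v) with hH
  refine ⟨part1 F hgraceful, ?_, fun g => ⟨(isoMapF F).comp (isoTranslate g H)⟩⟩
  intro u w huw
  set N : Set (ZMod v) := {z | H.Adj none (some z)} with hN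
  have hNcard : N.ncard = 2 := ncard_none F (h2 none)
  cases u with
  | none =>
    cases w with
    | none => exact absurd rfl huw
    | some y =>
      have hset : {g : ZMod v | (translateGraph g H).Adj none (some y)}
          = (fun z => y - z) '' N := by
        ext g
        simp only [Set.mem_setOf_eq, Set.mem_image, hN]
        constructor
        · intro hadj
          exact ⟨y + -g, hadj, by ring⟩
        · rintro ⟨z, hz, rfl⟩
          show H.Adj none (some (y + -(y - z)))
          have e : y + -(y - z) = z := by ring
          rw [e]; exact hz
      rw [hset, Set.ncard_image_of_injective _ (fun a b h => sub_right_inj.mp h), hNcard]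
  | some x =>
    cases w with
    | none =>
      have hset : {g : ZMod v | (translateGraph g H).Adj (some x) none}
          = (fun z => x - z) '' N := by
        ext g
        simp only [Set.mem_setOf_eq, Set.mem_image, hN]
        constructor
        · intro hadj
          exact ⟨x + -g, (H.adj_comm _ _).mp hadj, by ring⟩
        · rintro ⟨z, hz, rfl⟩
          show H.Adj (some (x + -(x - z))) none
          have e : x + -(x - z) = z := by ring
          rw [e]; exact (H.adj_comm _ _).mp hz
      rw [hset, Set.ncard_image_of_injective _ (fun a b h => sub_right_inj.mp h), hNcard]
    | some y =>
      have hxy : x ≠ y := fun h => huw (by rw [h])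
      set S : Set (ZMod v × ZMod v) :=
        {p | H.Adj (some p.1) (some p.2) ∧ p.1 - p.2 = x - y} with hS
      have hset : {g : ZMod v | (translateGraph g H).Adj (some x) (some y)}
          = (fun p : ZMod v × ZMod v => x - p.1) '' S := by
        ext g
        simp only [Set.mem_setOf_eq, Set.mem_image, hS]
        constructor
        · intro hadj
          exact ⟨(x + -g, y + -g), ⟨hadj, by ring⟩, by ring⟩
        · rintro ⟨⟨p1, p2⟩, ⟨hadj, hdiff⟩, rfl⟩
          show H.Adj (some (x + -(x - p1))) (some (y + -(x - p1)))
          have e1 : x + -(x - p1) = p1 := by ring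
          have e2 : y + -(x - p1) = p2 := by linear_combination hdiff
          rw [e1, e2]; exact hadj
      have hinj : Set.InjOn (fun p : ZMod v × ZMod v => x - p.1) S := by
        rintro ⟨p1, p2⟩ hp ⟨q1, q2⟩ hq h
        simp only [hS, Set.mem_setOf_eq] at hp hq
        simp only at h
        have e1 : p1 = q1 := sub_right_inj.mp h
        have e2 : p2 = q2 := by linear_combination hq.2 - hp.2 + e1
        rw [e1, e2]
      rw [hset, Set.ncard_image_of_injOn hinj]
      exact part1 F hgraceful (x - y) (sub_ne_zero.mpr hxy)
end

section
/- If v is odd, then K_v admits a decomposition into (v-1)/2 Hamiltonian cycles (Walecki's theorem). -/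
open SimpleGraph List

section helpers
variable {V : Type*} {G : SimpleGraph V}

lemma wMemZipWith {α β γ : Type*} {f : α → β → γ} :
    ∀ {l₁ : List α} {l₂ : List β} {c : γ}, c ∈ List.zipWith f l₁ l₂ →
      ∃ k, ∃ (h₁ : k < l₁.length) (h₂ : k < l₂.length), c = f l₁[k] l₂[k]
  | a :: l₁, b :: l₂, c => by
    intro h
    rw [List.zipWith_cons_cons, List.mem_cons] at h
    rcases h with h | h
    · exact ⟨0, by simp, by simp, by simpa using h⟩
    · obtain ⟨k, h₁, h₂, rfl⟩ := wMemZipWith h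
      exact ⟨k + 1, by simpa using h₁, by simpa using h₂, by simp⟩
  | [], _, c => by simp
  | _ :: _, [], c => by simp

lemma wChainNe : ∀ (l : List V) (a b : V), l ≠ [] → (a :: l).Nodup → b ∉ l →
    List.Chain Ne a (l ++ [b])
  | [], a, b, h, _, _ => absurd rfl h
  | c :: l, a, b, _, hnd, hb => by
    unfold List.Chain
    rw [List.cons_append, List.chain_cons]
    refine ⟨by simp at hnd; tauto, ?_⟩
    rcases eq_or_ne l [] with rfl | hl
    · exact List.chain_cons.2 ⟨by simp at hb; tauto, List.Chain.nil⟩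
    · exact wChainNe l c b hl (hnd.of_cons) (fun h => hb (List.mem_cons_of_mem _ h))

/-- Build a walk from a chain of adjacent vertices. -/
def wOfChain : ∀ {a b : V} (l : List V), List.Chain G.Adj a (l ++ [b]) → G.Walk a b
  | _, _, [], h => Walk.cons (List.chain_cons.1 h).1 Walk.nil
  | _, _, c :: l, h => Walk.cons (List.chain_cons.1 h).1 (wOfChain l (List.chain_cons.1 h).2)

@[simp] lemma wOfChain_support : ∀ {a b : V} (l : List V) (h : List.Chain G.Adj a (l ++ [b])),
    (wOfChain l h).support = a :: (l ++ [b])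
  | _, _, [], h => rfl
  | _, _, c :: l, h => by
    show _ :: (wOfChain l _).support = _
    erw [wOfChain_support]
    rfl

@[simp] lemma wOfChain_edges : ∀ {a b : V} (l : List V) (h : List.Chain G.Adj a (l ++ [b])),
    (wOfChain l h).edges = List.zipWith (fun u w => s(u, w)) (a :: l) (l ++ [b])
  | _, _, [], h => rfl
  | _, _, c :: l, h => by
    show _ :: (wOfChain l _).edges = _
    erw [wOfChain_edges]
    rfl

lemma wOfChain_isCycle {a : V} (l : List V) (h : List.Chain G.Adj a (l ++ [a]))
    (hnd : (a :: l).Nodup) (hlen : 2 ≤ l.length) : (wOfChain l h).IsCycle := by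
  match l with
  | b :: l =>
    show (Walk.cons _ (wOfChain l _)).IsCycle
    rw [Walk.cons_isCycle_iff]
    constructor
    · refine Walk.IsPath.mk' ?_
      erw [wOfChain_support]
      have hperm : (b :: (l ++ [a])).Perm (a :: b :: l) :=
        ((List.perm_append_singleton a l).cons b).trans (List.Perm.swap _ _ _)
      exact hperm.nodup_iff.2 hnd
    · intro hmem
      erw [wOfChain_edges] at hmem
      obtain ⟨k, h₁, h₂, hk⟩ := wMemZipWith hmem
      have hk1 : k < l.length + 1 := by simpa using h₁
      have hsab : s(a, b) = s((b :: l)[k], (l ++ [a])[k]) := hk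
      rw [Sym2.eq_iff] at hsab
      simp only [List.nodup_cons, List.mem_cons] at hnd
      rcases hsab with ⟨hA, hB⟩ | ⟨hA, hB⟩
      · -- a = (b::l)[k]
        have : a ∈ b :: l := hA ▸ List.getElem_mem h₁
        exact hnd.1 (by simpa using this)
      · -- a = (l ++ [a])[k], b = (b::l)[k]
        have hk0 : k = 0 := by
          by_contra hk0
          obtain ⟨k, rfl⟩ := Nat.exists_eq_succ_of_ne_zero hk0
          have hklen : k < l.length := by
            simpa using h₂
          have : b ∈ l := by
            have hb : b = l[k] := by
              rw [hB]; simp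
            rw [hb]; exact List.getElem_mem hklen
          exact hnd.2.1 this
        subst hk0
        have hl : 0 < l.length := by simp at hlen; omega
        have : a ∈ l := by
          have ha : a = l[0] := by
            rw [hA, List.getElem_append_left (by simpa using hl)]
          rw [ha]; exact List.getElem_mem hl
        exact hnd.1 (Or.inr this)
  | [] => simp at hlen

end helpers

/-- The Walecki zig-zag sequence as residues mod `2*n`:
`0, 1, 2n-1, 2, 2n-2, ..., n`. -/
def wZN (n j : ℕ) : ℕ := if j % 2 = 1 then (j + 1) / 2 else if j = 0 then 0 else 2 * n - j / 2

lemma wZN_lt {n : ℕ} (hn : 0 < n) {j : ℕ} (hj : j < 2 * n) : wZN n j < 2 * n := by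
  unfold wZN; split_ifs <;> first | omega | exact (by assumption : False).elim

lemma wZN_inj {n : ℕ} (hn : 0 < n) {j j' : ℕ} (hj : j < 2 * n) (hj' : j' < 2 * n)
    (h : wZN n j = wZN n j') : j = j' := by
  unfold wZN at h; split_ifs at h <;> omega

lemma wZN_zero (n : ℕ) : wZN n 0 = 0 := rfl

lemma wZN_last {n : ℕ} (hn : 0 < n) : wZN n (2 * n - 1) = n := by
  unfold wZN
  have : (2 * n - 1) % 2 = 1 := by omega
  rw [if_pos this]
  omega

lemma wZN_sum {n : ℕ} (hn : 0 < n) {j : ℕ} (hj : j + 1 < 2 * n) :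
    wZN n j + wZN n (j + 1) = (if j % 2 = 0 then (if j = 0 then 1 else 2 * n + 1) else 2 * n) := by
  unfold wZN; split_ifs <;> first | omega | exact (by assumption : False).elim

lemma wCancel {c a b : ℕ} (ha : a < c) (hb : b < c) (h : (a : ZMod c) = b) : a = b := by
  haveI : NeZero c := ⟨by omega⟩
  have ha' := ZMod.val_cast_of_lt ha
  have hb' := ZMod.val_cast_of_lt hb
  rw [h, hb'] at ha'
  omega

lemma wSumCast {n : ℕ} (hn : 0 < n) {j : ℕ} (hj : j + 1 < 2 * n) :
    ((wZN n j + wZN n (j + 1) : ℕ) : ZMod (2 * n)) = if j % 2 = 0 then 1 else 0 := by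
  rw [wZN_sum hn hj]
  split_ifs with h1 h2
  · simp
  · rw [Nat.cast_add, ZMod.natCast_self, Nat.cast_one, zero_add]
  · exact ZMod.natCast_self _
open SimpleGraph List

-- placeholders for part1/part2 content when testing standalone
section main

theorem walecki_main (n : ℕ) (hn : 0 < n) :
    ∃ F : Fin n → SimpleGraph (Fin (2 * n + 1)),
      (∀ i, ∃ (u : Fin (2 * n + 1)) (c : (F i).Walk u u),
        c.IsHamiltonianCycle ∧ ∀ e ∈ (F i).edgeSet, e ∈ c.edges) ∧
      (∀ i j, i ≠ j → Disjoint ((F i).edgeSet) ((F j).edgeSet)) ∧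
      (⨆ i, F i) = (⊤ : SimpleGraph (Fin (2 * n + 1))) := by
  classical
  haveI : NeZero (2 * n) := ⟨by omega⟩
  obtain ⟨e⟩ : Nonempty (Option (ZMod (2 * n)) ≃ Fin (2 * n + 1)) :=
    ⟨Fintype.equivFinOfCardEq (by simp [ZMod.card])⟩
  set q : Fin n → ℕ → ZMod (2 * n) := fun i j => ((i.val + wZN n j : ℕ) : ZMod (2 * n)) with hq
  set L : Fin n → List (Fin (2 * n + 1)) :=
    fun i => (List.range (2 * n)).map (fun j => e (some (q i j))) with hLdef
  have hLlen : ∀ i, (L i).length = 2 * n := by simp [hLdef]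
  have hLget : ∀ (i : Fin n) (k : ℕ) (hk : k < (L i).length), (L i)[k] = e (some (q i k)) := by
    intro i k hk
    simp [hLdef]
  have hqinj : ∀ (i : Fin n) (j j' : ℕ), j < 2 * n → j' < 2 * n → q i j = q i j' → j = j' := by
    intro i j j' hj hj' h
    apply wZN_inj hn hj hj'
    apply wCancel (wZN_lt hn hj) (wZN_lt hn hj')
    simp only [hq] at h
    push_cast at h
    exact add_left_cancel h
  have hLnodup : ∀ i, (L i).Nodup := by
    intro i
    rw [hLdef]
    refine List.nodup_range.map_on ?_
    intro j hj j' hj' hjj'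
    exact hqinj i j j' (List.mem_range.1 hj) (List.mem_range.1 hj')
      (Option.some_injective _ (e.injective hjj'))
  have hnotmem : ∀ i, e none ∉ L i := by
    intro i hmem
    rw [hLdef] at hmem
    obtain ⟨j, -, hj⟩ := List.mem_map.1 hmem
    exact absurd (e.injective hj) (by simp)
  have hLne : ∀ i, L i ≠ [] := by
    intro i h
    have := hLlen i
    rw [h] at this
    simp at this
    omega
  have hconsnodup : ∀ i, (e none :: L i).Nodup := by
    intro i
    rw [List.nodup_cons]
    exact ⟨hnotmem i, hLnodup i⟩
  have hchain : ∀ i, List.Chain (⊤ : SimpleGraph (Fin (2 * n + 1))).Adj (e none)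
      (L i ++ [e none]) := by
    intro i
    have h := wChainNe (L i) (e none) (e none) (hLne i) (hconsnodup i) (hnotmem i)
    exact List.IsChain.imp (fun ⦃a b⦄ hab => by simpa using hab) h
  set wlk : (i : Fin n) → (⊤ : SimpleGraph (Fin (2 * n + 1))).Walk (e none) (e none) :=
    fun i => wOfChain (L i) (hchain i) with hwlk
  have hcyc : ∀ i, (wlk i).IsCycle := by
    intro i
    exact wOfChain_isCycle (L i) (hchain i) (hconsnodup i) (by rw [hLlen]; omega)
  have hedgelen : ∀ i, (wlk i).edges.length = 2 * n + 1 := by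
    intro i
    rw [hwlk]
    simp only [wOfChain_edges, List.length_zipWith, List.length_cons, List.length_append,
      hLlen]
    simp
  -- classification of edges
  have hclass : ∀ (i : Fin n) (E : Sym2 (Fin (2 * n + 1))), E ∈ (wlk i).edges →
      (∃ u : ℕ, u < 2 * n ∧ (u = i.val ∨ u = i.val + n) ∧
        E = s(e none, e (some ((u : ℕ) : ZMod (2 * n))))) ∨
      (∃ a b : ZMod (2 * n), E = s(e (some a), e (some b)) ∧
        ∃ ε : ℕ, ε ≤ 1 ∧ a + b = ((2 * i.val + ε : ℕ) : ZMod (2 * n))) := by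
    intro i E hE
    rw [hwlk] at hE
    rw [wOfChain_edges] at hE
    obtain ⟨k, h₁, h₂, hk⟩ := wMemZipWith hE
    have hiv : i.val < n := i.isLt
    have hk2n : k < 2 * n + 1 := by
      simpa [hLlen] using h₁
    cases k with
    | zero =>
      left
      refine ⟨i.val, by omega, Or.inl rfl, ?_⟩
      rw [hk]
      have e1 : (e none :: L i)[0] = e none := rfl
      have e2 : ((L i ++ [e none]))[0]'(by simp) = (L i)[0]'(by rw [hLlen]; omega) :=
        List.getElem_append_left (by rw [hLlen]; omega)
      rw [e1, e2, hLget i 0 (by rw [hLlen]; omega)]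
      have : q i 0 = ((i.val : ℕ) : ZMod (2 * n)) := by
        simp [hq, wZN_zero]
      rw [this]
    | succ k =>
      have e1 : (e none :: L i)[k+1]'(h₁) = (L i)[k]'(by rw [hLlen]; omega) := by
        simp
      rcases eq_or_lt_of_le (show k + 2 ≤ 2 * n + 1 by omega) with heq | hlt
      · -- last edge : k = 2*n - 1
        have hkval : k = 2 * n - 1 := by omega
        left
        refine ⟨i.val + n, by omega, Or.inr rfl, ?_⟩
        have e2 : ((L i ++ [e none]))[k+1]'(h₂) = e none := by
          rw [List.getElem_append_right (by rw [hLlen]; omega)]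
          simp [hLlen, hkval]
        rw [hk, e1, e2, hLget i k (by rw [hLlen]; omega)]
        have : q i k = ((i.val + n : ℕ) : ZMod (2 * n)) := by
          subst hkval
          simp only [hq]
          rw [wZN_last hn]
        rw [this, Sym2.eq_swap]
      · -- middle edge
        right
        have hklt : k + 1 < 2 * n := by omega
        have e2 : ((L i ++ [e none]))[k+1]'(h₂) = (L i)[k+1]'(by rw [hLlen]; omega) :=
          List.getElem_append_left (by rw [hLlen]; omega)
        refine ⟨q i k, q i (k + 1), ?_, ?_⟩
        · rw [hk, e1, e2, hLget i k (by rw [hLlen]; omega),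
            hLget i (k + 1) (by rw [hLlen]; omega)]
        · refine ⟨if k % 2 = 0 then 1 else 0, by split_ifs <;> omega, ?_⟩
          have hsum := wSumCast hn hklt
          rw [hq]
          push_cast
          push_cast at hsum
          rw [← hsum]
          push_cast
          ring
  have hvalne : ∀ i j : Fin n, i ≠ j → i.val ≠ j.val := fun i j hij h => hij (Fin.ext h)
  have hdisjE : ∀ (i j : Fin n), i ≠ j → ∀ E, E ∈ (wlk i).edges → E ∈ (wlk j).edges → False := by
    intro i j hij E hEi hEj
    have hi := hclass i E hEi
    have hj := hclass j E hEj
    have hiv : i.val < n := i.isLt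
    have hjv : j.val < n := j.isLt
    have hvne := hvalne i j hij
    rcases hi with ⟨u, hu, huv, rfl⟩ | ⟨a, b, rfl, ε, hε, hab⟩
    · rcases hj with ⟨u', hu', huv', hEq⟩ | ⟨a, b, hEq, ε, hε, hab⟩
      · rw [Sym2.eq_iff] at hEq
        rcases hEq with ⟨-, h2⟩ | ⟨h1, -⟩
        · have h3 : ((u : ℕ) : ZMod (2 * n)) = ((u' : ℕ) : ZMod (2 * n)) :=
            Option.some_injective _ (e.injective h2)
          have := wCancel hu hu' h3
          omega
        · exact absurd (e.injective h1) (by simp)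
      · rw [Sym2.eq_iff] at hEq
        rcases hEq with ⟨h1, -⟩ | ⟨h1, -⟩ <;> exact absurd (e.injective h1) (by simp)
    · rcases hj with ⟨u', hu', huv', hEq⟩ | ⟨a', b', hEq, ε', hε', hab'⟩
      · rw [Sym2.eq_iff] at hEq
        rcases hEq with ⟨h1, -⟩ | ⟨-, h2⟩
        · exact absurd (e.injective h1) (by simp)
        · exact absurd (e.injective h2) (by simp)
      · rw [Sym2.eq_iff] at hEq
        have hsum : a + b = a' + b' := by
          rcases hEq with ⟨h1s, h2s⟩ | ⟨h1s, h2s⟩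
          · rw [Option.some_injective _ (e.injective h1s),
              Option.some_injective _ (e.injective h2s)]
          · rw [Option.some_injective _ (e.injective h1s),
              Option.some_injective _ (e.injective h2s)]
            ring
        rw [hab, hab'] at hsum
        have := wCancel (show 2 * i.val + ε < 2 * n by omega)
          (show 2 * j.val + ε' < 2 * n by omega) hsum
        omega
  have htailnodup : ∀ i, (L i ++ [e none]).Nodup := by
    intro i
    exact (List.perm_append_singleton _ _).nodup_iff.2 (hconsnodup i)
  have hmemtail : ∀ (i : Fin n) (x : Fin (2 * n + 1)), x ∈ L i ++ [e none] := by
    intro i x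
    have hx : x = e (e.symm x) := (e.apply_symm_apply x).symm
    rcases hy : e.symm x with _ | t
    · rw [hx, hy]
      exact List.mem_append_right _ (List.mem_singleton_self _)
    · have hbij : Function.Bijective (fun j : Fin (2 * n) => q i j.val) := by
        rw [Fintype.bijective_iff_injective_and_card]
        constructor
        · intro j j' hjj'
          exact Fin.ext (hqinj i _ _ j.isLt j'.isLt hjj')
        · simp [ZMod.card]
      obtain ⟨j, hj⟩ := hbij.surjective t
      apply List.mem_append_left
      rw [hx, hy, hLdef]
      exact List.mem_map.2 ⟨j.val, List.mem_range.2 j.isLt, congrArg (fun z => e (some z)) hj⟩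
  have hFedge : ∀ i, (fromEdgeSet {E | E ∈ (wlk i).edges}).edgeSet = {E | E ∈ (wlk i).edges} := by
    intro i
    rw [edgeSet_fromEdgeSet]
    ext E
    simp only [Set.mem_diff, Set.mem_setOf_eq, and_iff_left_iff_imp]
    intro hE
    exact (⊤ : SimpleGraph (Fin (2 * n + 1))).not_isDiag_of_mem_edgeSet
      ((wlk i).edges_subset_edgeSet hE)
  refine ⟨fun i => fromEdgeSet {E | E ∈ (wlk i).edges}, ?_, ?_, ?_⟩
  · intro i
    have hsub : ∀ E ∈ (wlk i).edges, E ∈ (fromEdgeSet {E | E ∈ (wlk i).edges}).edgeSet := by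
      intro E hE
      rw [hFedge]
      exact hE
    refine ⟨e none, (wlk i).transfer _ hsub, ?_, ?_⟩
    · rw [Walk.isHamiltonianCycle_iff_isCycle_and_support_count_tail_eq_one]
      refine ⟨(hcyc i).transfer _, ?_⟩
      intro a
      rw [Walk.support_transfer]
      have hsupp : (wlk i).support = e none :: (L i ++ [e none]) := by
        rw [hwlk]
        exact wOfChain_support _ _
      rw [hsupp]
      simp only [List.tail_cons]
      exact List.count_eq_one_of_mem (htailnodup i) (hmemtail i a)
    · intro E hE
      rw [Walk.edges_transfer]
      rw [hFedge] at hE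
      exact hE
  · intro i j hij
    rw [hFedge, hFedge, Set.disjoint_left]
    intro E hEi hEj
    exact hdisjE i j hij E hEi hEj
  · rw [← edgeSet_inj]
    have hsup : (⨆ i, fromEdgeSet {E | E ∈ (wlk i).edges}).edgeSet
        = ⋃ i, {E : Sym2 (Fin (2 * n + 1)) | E ∈ (wlk i).edges} := by
      ext E
      induction E using Sym2.ind with
      | _ x y =>
        rw [mem_edgeSet, iSup_adj]
        simp only [Set.mem_iUnion]
        constructor
        · rintro ⟨i, hadj⟩
          exact ⟨i, ((hFedge i) ▸ ((mem_edgeSet _).2 hadj) : s(x,y) ∈ {E | E ∈ (wlk i).edges})⟩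
        · rintro ⟨i, hmem⟩
          refine ⟨i, (mem_edgeSet _).1 ?_⟩
          rw [hFedge i]
          exact hmem
    rw [hsup]
    have hTcard : ∀ i, ((wlk i).edges.toFinset).card = 2 * n + 1 := by
      intro i
      rw [List.toFinset_card_of_nodup (hcyc i).isCircuit.isTrail.edges_nodup]
      exact hedgelen i
    have hsetfin : (⋃ i, {E : Sym2 (Fin (2 * n + 1)) | E ∈ (wlk i).edges})
        = ↑(Finset.univ.biUnion (fun i : Fin n => (wlk i).edges.toFinset)) := by
      rw [Finset.coe_biUnion]
      ext E
      simp
    rw [hsetfin]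
    have hBcard : (Finset.univ.biUnion (fun i : Fin n => (wlk i).edges.toFinset)).card
        = n * (2 * n + 1) := by
      rw [Finset.card_biUnion]
      · rw [Finset.sum_congr rfl (fun i _ => hTcard i)]
        simp [mul_comm]
      · intro i _ j _ hij
        rw [Function.onFun, Finset.disjoint_left]
        intro E hEi hEj
        exact hdisjE i j hij E (List.mem_toFinset.1 hEi) (List.mem_toFinset.1 hEj)
    have hfinal : (Finset.univ.biUnion (fun i : Fin n => (wlk i).edges.toFinset))
        = (⊤ : SimpleGraph (Fin (2 * n + 1))).edgeFinset := by
      apply Finset.eq_of_subset_of_card_le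
      · intro E hE
        obtain ⟨i, -, hEi⟩ := Finset.mem_biUnion.1 hE
        rw [mem_edgeFinset]
        exact (wlk i).edges_subset_edgeSet (List.mem_toFinset.1 hEi)
      · rw [hBcard, card_edgeFinset_top_eq_card_choose_two, Fintype.card_fin,
          Nat.choose_two_right]
        have h1 : 2 * n + 1 - 1 = 2 * n := by omega
        rw [h1]
        have h2 : (2 * n + 1) * (2 * n) = 2 * (n * (2 * n + 1)) := by ring
        rw [h2, Nat.mul_div_cancel_left _ (by norm_num : 0 < 2)]
    rw [hfinal, coe_edgeFinset]

end main


/-- Walecki: if `v` is odd, then `K_v` decomposes into `(v-1)/2`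
Hamiltonian cycles. -/
theorem stmt_15 (v : ℕ) (hv : Odd v) :
    ∃ F : Fin ((v - 1) / 2) → SimpleGraph (Fin v),
      (∀ i, ∃ (u : Fin v) (c : (F i).Walk u u),
        c.IsHamiltonianCycle ∧ ∀ e ∈ (F i).edgeSet, e ∈ c.edges) ∧
      (∀ i j, i ≠ j → Disjoint ((F i).edgeSet) ((F j).edgeSet)) ∧
      (⨆ i, F i) = (⊤ : SimpleGraph (Fin v)) := by
  obtain ⟨n, rfl⟩ : ∃ n, v = 2 * n + 1 := by
    obtain ⟨k, hk⟩ := hv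
    exact ⟨k, by omega⟩
  rcases Nat.eq_zero_or_pos n with rfl | hn
  · refine ⟨fun _ => ⊥, ?_, ?_, ?_⟩
    · intro i
      exact absurd i.isLt (by omega)
    · intro i j _
      exact absurd i.isLt (by omega)
    · ext x y
      have hxy : x = y := Fin.ext (by omega)
      subst hxy
      simp [SimpleGraph.iSup_adj]
  · have h : (2 * n + 1 - 1) / 2 = n := by omega
    rw [h]
    exact walecki_main n hn
end

section
/- If v is even, then K_v admits a decomposition into (v-2)/2 Hamiltonian cycles and one perfect matching. -/
open SimpleGraph
open Fin.NatCast Fin.CommRing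

lemma cg_adj_succ {N : ℕ} (p : Fin (N+3)) : (cycleGraph (N+3)).Adj p (p + 1) := by
  have h := (cycleGraph_adj (n := N+1) (u := p) (v := p+1))
  rw [h]; right; simp

lemma cg_cast_succ {N : ℕ} (j : ℕ) : ((j : Fin (N+3)) + 1) = ((j+1 : ℕ) : Fin (N+3)) := by
  push_cast; ring

def tailWalk (N : ℕ) : (j : ℕ) → (h1 : 0 < j) → (h2 : j < N + 3) →
    (cycleGraph (N+3)).Walk ((j : Fin (N+3))) 0
  | j, h1, h2 =>
    if h : j + 1 < N + 3 then
      SimpleGraph.Walk.cons (by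
        have := cg_adj_succ (j : Fin (N+3))
        rwa [cg_cast_succ] at this) (tailWalk N (j+1) (by omega) h)
    else
      SimpleGraph.Walk.cons (by
        have := cg_adj_succ (j : Fin (N+3))
        rw [cg_cast_succ] at this
        have hj : j + 1 = N + 3 := by omega
        rw [hj] at this
        simpa using this) SimpleGraph.Walk.nil
  termination_by j _ _ => N + 3 - j

lemma tailWalk_support (N : ℕ) : ∀ (j : ℕ) (h1 : 0 < j) (h2 : j < N + 3),
    (tailWalk N j h1 h2).support
      = (List.range' j (N + 3 - j)).map (Nat.cast) ++ [(0 : Fin (N+3))]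
  | j, h1, h2 => by
    rw [tailWalk]
    split
    · rename_i h
      rw [SimpleGraph.Walk.support_cons, tailWalk_support N (j+1) (by omega) h]
      have : N + 3 - j = (N + 3 - (j+1)) + 1 := by omega
      rw [this, List.range'_succ]
      simp
    · rename_i h
      have hj : N + 3 - j = 1 := by omega
      simp [hj, List.range']
  termination_by j _ _ => N + 3 - j

lemma tailWalk_edges (N : ℕ) : ∀ (j : ℕ) (h1 : 0 < j) (h2 : j < N + 3),
    (tailWalk N j h1 h2).edges
      = (List.range' j (N + 3 - j)).map (fun (a : ℕ) => s((a : Fin (N+3)), ((a : Fin (N+3)) + 1)))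
  | j, h1, h2 => by
    rw [tailWalk]
    split
    · rename_i h
      rw [SimpleGraph.Walk.edges_cons, tailWalk_edges N (j+1) (by omega) h]
      have : N + 3 - j = (N + 3 - (j+1)) + 1 := by omega
      rw [this, List.range'_succ]
      rw [List.map_cons]
      congr 1
      rw [cg_cast_succ]
    · rename_i h
      have hj : N + 3 - j = 1 := by omega
      have hj3 : j + 1 = N + 3 := by omega
      simp only [hj, List.range'_one, List.map_cons, List.map_nil,
        SimpleGraph.Walk.edges_cons, SimpleGraph.Walk.edges_nil]
      congr 1
      beta_reduce
      rw [cg_cast_succ, hj3]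
      simp
  termination_by j _ _ => N + 3 - j

lemma cg_cast_inj {N : ℕ} {a b : ℕ} (ha : a < N+3) (hb : b < N+3)
    (h : (a : Fin (N+3)) = b) : a = b := by
  have := congrArg Fin.val h
  simpa [Fin.val_natCast, Nat.mod_eq_of_lt, ha, hb] using this

lemma cycleGraph_ham (N : ℕ) : ∃ c : (cycleGraph (N+3)).Walk 0 0,
    c.IsHamiltonianCycle ∧ ∀ p : Fin (N+3), s(p, p+1) ∈ c.edges := by
  have h01 : (cycleGraph (N+3)).Adj 0 ((1:ℕ) : Fin (N+3)) := by
    have := cg_adj_succ (0 : Fin (N+3))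
    simpa using this
  refine ⟨SimpleGraph.Walk.cons h01 (tailWalk N 1 one_pos (by omega)), ?_, ?_⟩
  · have hsupp : (SimpleGraph.Walk.cons h01 (tailWalk N 1 one_pos (by omega))).support
        = 0 :: ((List.range' 1 (N + 2)).map (Nat.cast) ++ [(0 : Fin (N+3))]) := by
      rw [SimpleGraph.Walk.support_cons, tailWalk_support]
      norm_num
    have hedges : (SimpleGraph.Walk.cons h01 (tailWalk N 1 one_pos (by omega))).edges
        = (List.range' 0 (N + 3)).map
            (fun (a : ℕ) => s((a : Fin (N+3)), ((a : Fin (N+3)) + 1))) := by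
      rw [SimpleGraph.Walk.edges_cons, tailWalk_edges, List.range'_succ, List.map_cons]
      congr 2
    have hmapnd : ((List.range' 1 (N + 2)).map (Nat.cast : ℕ → Fin (N+3))).Nodup := by
      refine List.Nodup.map_on ?_ (List.nodup_range' _ one_pos)
      intro a ha b hb hab
      rw [List.mem_range'_1] at ha hb
      exact cg_cast_inj (by omega) (by omega) hab
    have hnot0 : (0 : Fin (N+3)) ∉ (List.range' 1 (N + 2)).map (Nat.cast : ℕ → Fin (N+3)) := by
      intro hmem
      obtain ⟨a, ha, hc⟩ := List.mem_map.mp hmem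
      rw [List.mem_range'_1] at ha
      have h0c : ((a:ℕ) : Fin (N+3)) = ((0:ℕ) : Fin (N+3)) := by simpa using hc
      have : a = 0 := cg_cast_inj (by omega) (by omega : (0:ℕ) < N+3) h0c
      omega
    rw [SimpleGraph.Walk.isHamiltonianCycle_iff_isCycle_and_support_count_tail_eq_one]
    constructor
    · refine ⟨⟨⟨?_⟩, by simp⟩, ?_⟩
      · -- edges nodup
        rw [hedges]
        refine List.Nodup.map_on ?_ (List.nodup_range' _ one_pos)
        intro a ha b hb hab
        rw [List.mem_range'_1] at ha hb
        rw [Sym2.eq_iff] at hab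
        rcases hab with ⟨h1, _⟩ | ⟨h1, h2⟩
        · exact cg_cast_inj (by omega) (by omega) h1
        · exfalso
          have : (a : Fin (N+3)) = (a : Fin (N+3)) + 1 + 1 := by
            conv_lhs => rw [h1, ← h2]
          have h2ne : ((2:ℕ) : Fin (N+3)) ≠ 0 := by
            intro hc
            have := cg_cast_inj (a := 2) (b := 0) (by omega) (by omega) (by simpa using hc)
            omega
          apply h2ne
          have := left_eq_add.mp (by rw [add_assoc] at this; exact this)
          rw [← this]; push_cast; ring
      · -- support tail nodup
        rw [hsupp]
        simp only [List.tail_cons]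
        rw [List.nodup_append]
        exact ⟨hmapnd, List.nodup_singleton _,
          fun a ha b hb hab => hnot0 (by rw [List.mem_singleton] at hb; rw [hab, hb] at ha; exact ha)⟩
    · intro a
      rw [hsupp]
      simp only [List.tail_cons]
      rw [List.count_append]
      by_cases h0 : a = 0
      · subst h0
        rw [List.count_eq_zero_of_not_mem hnot0]
        simp
      · have hmem : a ∈ (List.range' 1 (N + 2)).map (Nat.cast : ℕ → Fin (N+3)) := by
          refine List.mem_map.mpr ⟨a.val, ?_, Fin.cast_val_eq_self a⟩
          rw [List.mem_range'_1]
          have := a.isLt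
          have : a.val ≠ 0 := fun hc => h0 (Fin.ext hc)
          omega
        rw [List.count_eq_one_of_mem hmapnd hmem]
        have hns : a ∉ [(0 : Fin (N+3))] := by simpa using h0
        rw [List.count_eq_zero_of_not_mem hns]
  · intro p
    rw [SimpleGraph.Walk.edges_cons, tailWalk_edges]
    by_cases hp : p = 0
    · subst hp
      left
    · right
      refine List.mem_map.mpr ⟨p.val, ?_, by rw [Fin.cast_val_eq_self]⟩
      rw [List.mem_range'_1]
      have := p.isLt
      have : p.val ≠ 0 := fun hc => hp (Fin.ext hc)
      omega

open SimpleGraph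

namespace Walecki

variable (t : ℕ)

abbrev Zm (t : ℕ) := ZMod (2*t+1)
abbrev V (t : ℕ) := Option (Zm t)

lemma natval (a : ℕ) (h : a < 2*t+1) : ((a : Zm t)).val = a := ZMod.val_cast_of_lt h

lemma valnat (x : Zm t) : ((x.val : ℕ) : Zm t) = x := ZMod.natCast_rightInverse x

lemma val_lt (x : Zm t) : x.val < 2*t+1 := ZMod.val_lt x

lemma val_inj {x y : Zm t} (h : x.val = y.val) : x = y := ZMod.val_injective _ h

lemma m_zero : ((2*t+1 : ℕ) : Zm t) = 0 := ZMod.natCast_self _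

/-- the zigzag offsets -/
def zig (j : ℕ) : Zm t := if Even j then -((j/2 : ℕ) : Zm t) else (((j+1)/2 : ℕ) : Zm t)

lemma zig_even (a : ℕ) : zig t (2*a) = -((a:ℕ) : Zm t) := by
  simp [zig, Nat.mul_div_cancel_left a (by norm_num : 0 < 2)]

lemma zig_odd (a : ℕ) : zig t (2*a+1) = ((a+1 : ℕ) : Zm t) := by
  have he : ¬ Even (2*a+1) := by simp [Nat.even_add_one, Nat.even_mul]
  have : (2*a+1+1)/2 = a+1 := by omega
  simp [zig, he, this]

/-- the Walecki vertex ordering for the cycle anchored at `k` -/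
def rho (k : Zm t) (p : Fin (2*t+2)) : V t :=
  if p.val = 0 then none else some (k + zig t (p.val - 1))

/-- defining relation of the `k`-th Hamiltonian cycle graph -/
def R (k : Zm t) : V t → V t → Prop
  | some x, some y => x + y = 2*k ∨ x + y = 2*k+1
  | none, some x => x = k ∨ x = k - (t : Zm t)
  | _, _ => False

def WG (k : Zm t) : SimpleGraph (V t) := SimpleGraph.fromRel (R t k)

/-- the perfect-matching partner function -/
def mu : V t → V t
  | none => some ((t : ℕ) : Zm t)
  | some x => if x = ((t : ℕ) : Zm t) then none else some (-1 - x)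

def MG : SimpleGraph (V t) := SimpleGraph.fromRel (fun a b => b = mu t a)

lemma two_t : ((2*t : ℕ) : Zm t) = -1 := by
  have := m_zero t
  push_cast at this ⊢
  linear_combination this

lemma two_mul_cancel {x y : Zm t} (h : 2*x = 2*y) : x = y := by
  have h2 : ((t+1 : ℕ) : Zm t) * 2 = 1 := by
    have := m_zero t
    push_cast at this ⊢
    linear_combination this
  calc x = ((t+1 : ℕ) : Zm t) * 2 * x := by rw [h2]; ring
    _ = ((t+1 : ℕ) : Zm t) * (2*x) := by ring
    _ = ((t+1 : ℕ) : Zm t) * (2*y) := by rw [h]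
    _ = x*0 + y := by rw [← mul_assoc, h2]; ring
    _ = y := by ring

lemma eq_t_iff (x : Zm t) : x = ((t:ℕ) : Zm t) ↔ 2*x = -1 := by
  constructor
  · rintro rfl
    rw [← two_t t]; push_cast; ring
  · intro h
    apply two_mul_cancel t
    rw [h, ← two_t t]; push_cast; ring

lemma mu_ne (a : V t) : mu t a ≠ a := by
  cases a with
  | none => simp [mu]
  | some x =>
    simp only [mu]
    split
    · simp
    · rename_i h
      simp only [ne_eq, Option.some.injEq]
      intro hc
      exact h ((eq_t_iff t x).mpr (by linear_combination -hc))

lemma mu_invol (a : V t) : mu t (mu t a) = a := by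
  cases a with
  | none =>
    simp [mu]
  | some x =>
    by_cases hx : x = ((t:ℕ) : Zm t)
    · simp [mu, hx]
    · have h1 : mu t (some x) = some (-1 - x) := by simp [mu, hx]
      rw [h1]
      have h2 : (-1 - x) ≠ ((t:ℕ) : Zm t) := by
        intro hc
        rw [eq_t_iff] at hc
        exact hx ((eq_t_iff t x).mpr (by linear_combination -hc))
      have h3 : mu t (some (-1 - x)) = some (-1 - (-1 - x)) := by simp [mu, h2]
      rw [h3]
      congr 1; ring

lemma MG_adj (a b : V t) : (MG t).Adj a b ↔ b = mu t a := by
  constructor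
  · rintro ⟨hne, h | h⟩
    · exact h
    · rw [h, mu_invol]
  · intro h
    exact ⟨by rw [h]; exact (mu_ne t a).symm, Or.inl h⟩

lemma MG_neighborSet (a : V t) : (MG t).neighborSet a = {mu t a} := by
  ext b
  simp [mem_neighborSet, MG_adj]

end Walecki

open SimpleGraph

namespace Walecki

variable (t : ℕ)

lemma rho_zero (k : Zm t) (p : Fin (2*t+2)) (h : p.val = 0) : rho t k p = none := by
  simp [rho, h]

lemma rho_succ_val (k : Zm t) (j : ℕ) (h : j + 1 < 2*t+2) :
    rho t k ⟨j+1, h⟩ = some (k + zig t j) := by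
  simp [rho]

lemma fin_one_val : ((1 : Fin (2*t+2))).val = 1 := by
  rw [Fin.val_one']
  exact Nat.mod_eq_of_lt (by omega)

lemma fin_succ (a : ℕ) (h : a + 1 < 2*t+2) (h0 : a < 2*t+2) :
    (⟨a, h0⟩ : Fin (2*t+2)) + 1 = ⟨a+1, h⟩ := by
  apply Fin.ext
  rw [Fin.add_def, fin_one_val]
  exact Nat.mod_eq_of_lt h

lemma fin_wrap : (⟨2*t+1, by omega⟩ : Fin (2*t+2)) + 1 = ⟨0, by omega⟩ := by
  apply Fin.ext
  rw [Fin.add_def, fin_one_val]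
  simp

lemma pos_pair_even (k d : Zm t) (h1 : 1 ≤ d.val) (h2 : d.val ≤ t) :
    rho t k ⟨2*d.val, by omega⟩ = some (k + d) ∧
    rho t k ⟨2*d.val+1, by omega⟩ = some (k - d) := by
  constructor
  · have he : (⟨2*d.val, by omega⟩ : Fin (2*t+2)) = ⟨(2*(d.val-1)+1)+1, by omega⟩ :=
      Fin.ext (by simp; omega)
    rw [he, rho_succ_val, zig_odd]
    have : d.val - 1 + 1 = d.val := by omega
    rw [this, valnat]
  · have he : (⟨2*d.val+1, by omega⟩ : Fin (2*t+2)) = ⟨(2*d.val)+1, by omega⟩ := rfl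
    rw [he, rho_succ_val, zig_even, valnat]
    congr 1
    ring

lemma pos_pair_odd (k d : Zm t) (h1 : 1 ≤ d.val) (h2 : d.val ≤ t) :
    rho t k ⟨2*d.val-1, by omega⟩ = some (k + 1 - d) ∧
    rho t k ⟨2*d.val, by omega⟩ = some (k + d) := by
  refine ⟨?_, (pos_pair_even t k d h1 h2).1⟩
  have he : (⟨2*d.val-1, by omega⟩ : Fin (2*t+2)) = ⟨(2*(d.val-1))+1, by omega⟩ :=
    Fin.ext (by simp; omega)
  rw [he, rho_succ_val, zig_even]
  have hc : ((d.val - 1 : ℕ) : Zm t) = d - 1 := by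
    rw [Nat.cast_sub h1, valnat]
    simp
  rw [hc]
  congr 1
  ring

lemma wg_adj (k : Zm t) (a b : V t) :
    (WG t k).Adj a b ↔ a ≠ b ∧ (R t k a b ∨ R t k b a) := by
  simp [WG, fromRel_adj]

lemma cast2_ne_zero (b : ℕ) (h1 : 1 ≤ b) (h2 : b ≤ 2*t) : ((b : ℕ) : Zm t) ≠ 0 := by
  intro hc
  have := natval t b (by omega)
  rw [hc] at this
  simp at this
  omega

lemma rho_forward (k : Zm t) (p : Fin (2*t+2)) :
    (WG t k).Adj (rho t k p) (rho t k (p + 1)) := by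
  obtain ⟨a, ha⟩ := p
  rcases Nat.eq_zero_or_pos a with h0 | h0
  · subst h0
    rw [fin_succ t 0 (by omega), rho_zero t k ⟨0, by omega⟩ rfl]
    have : rho t k ⟨0+1, by omega⟩ = some (k + zig t 0) := rho_succ_val t k 0 (by omega)
    rw [this]
    have hz : zig t 0 = 0 := by
      have := zig_even t 0
      simpa using this
    rw [hz, add_zero, wg_adj]
    exact ⟨by simp, Or.inl (Or.inl rfl)⟩
  rcases Nat.lt_or_ge a (2*t+1) with hlt | hge
  · -- middle: 1 ≤ a ≤ 2t
    have hmk : (⟨a, ha⟩ : Fin (2*t+2)) = ⟨(a-1)+1, by omega⟩ := Fin.ext (by simp; omega)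
    rw [fin_succ t a (by omega), hmk, rho_succ_val,
      show (⟨a+1, by omega⟩ : Fin (2*t+2)) = ⟨a+1, by omega⟩ from rfl, rho_succ_val]
    rcases Nat.even_or_odd a with ⟨b, hb⟩ | ⟨b, hb⟩
    · -- a = 2b, b ≥ 1 : zig (a-1) = b, zig a = -b
      have hb' : a = 2*b := by omega
      subst hb'
      have hj : 2*b - 1 = 2*(b-1)+1 := by omega
      rw [hj, zig_odd, zig_even]
      have hb1 : b - 1 + 1 = b := by omega
      rw [hb1, wg_adj]
      constructor
      · simp only [ne_eq, Option.some.injEq]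
        intro hc
        have : ((2*b : ℕ) : Zm t) = 0 := by
          push_cast
          linear_combination hc
        exact cast2_ne_zero t (2*b) (by omega) (by omega) this
      · left; left
        push_cast
        ring
    · -- a = 2b+1 : zig (a-1) = -b, zig a = b+1
      have hb' : a = 2*b+1 := by omega
      subst hb'
      have hj : 2*b+1 - 1 = 2*b := by omega
      rw [hj, zig_even, zig_odd]
      rw [wg_adj]
      constructor
      · simp only [ne_eq, Option.some.injEq]
        intro hc
        have : ((2*b+1 : ℕ) : Zm t) = 0 := by
          push_cast at hc ⊢
          linear_combination -hc
        exact cast2_ne_zero t (2*b+1) (by omega) (by omega) this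
      · left; right
        push_cast
        ring
  · -- a = 2t+1 : wraparound
    have haa : a = 2*t+1 := by omega
    subst haa
    rw [show (⟨2*t+1, ha⟩ : Fin (2*t+2)) = ⟨2*t+1, by omega⟩ from rfl, fin_wrap,
      rho_zero t k ⟨0, by omega⟩ rfl]
    have hmk : (⟨2*t+1, ha⟩ : Fin (2*t+2)) = ⟨(2*t)+1, by omega⟩ := rfl
    rw [hmk, rho_succ_val, zig_even]
    rw [wg_adj]
    refine ⟨by simp, Or.inr (Or.inr ?_)⟩
    congr 1
    ring

end Walecki

open SimpleGraph

namespace Walecki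

variable (t : ℕ)

lemma rho_surj (k : Zm t) : Function.Surjective (rho t k) := by
  intro b
  cases b with
  | none => exact ⟨⟨0, by omega⟩, rho_zero t k _ rfl⟩
  | some x =>
    set d := x - k with hd
    have hx : x = k + d := by rw [hd]; ring
    rcases Nat.eq_zero_or_pos d.val with h0 | h0
    · -- d = 0 : position 1
      have hd0 : d = 0 := val_inj t (by rw [h0]; simp)
      refine ⟨⟨0+1, by omega⟩, ?_⟩
      rw [rho_succ_val]
      have hz : zig t 0 = 0 := by simpa using zig_even t 0
      rw [hz, hx, hd0]
    rcases Nat.lt_or_ge t d.val with hgt | hle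
    · -- t+1 ≤ d.val ≤ 2t : position 2*(-d).val+1 where x = k - (-d)
      have hv := val_lt t d
      have hd0' : d ≠ 0 := by
        intro hc
        rw [hc] at h0
        simp at h0
      have hnegval : (-d).val = 2*t+1 - d.val := by
        rw [ZMod.neg_val, if_neg hd0']
      obtain ⟨_, e2⟩ := pos_pair_even t k (-d) (by omega) (by omega)
      refine ⟨⟨2*(-d).val+1, by omega⟩, ?_⟩
      rw [e2, hx]
      congr 1
      ring
    · -- 1 ≤ d.val ≤ t : odd position 2*d.val
      refine ⟨⟨2*d.val, by omega⟩, ?_⟩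
      rw [(pos_pair_even t k d h0 hle).1, hx]

lemma rho_bij (k : Zm t) : Function.Bijective (rho t k) := by
  rw [Fintype.bijective_iff_surjective_and_card]
  refine ⟨rho_surj t k, ?_⟩
  simp [ZMod.card]

/-- every edge of `WG t k` is a consecutive `rho` pair -/
lemma edge_back (ht : 1 ≤ t) (k : Zm t) (a b : V t) (h : (WG t k).Adj a b) :
    ∃ p : Fin (2*t+2), (a = rho t k p ∧ b = rho t k (p+1)) ∨
      (b = rho t k p ∧ a = rho t k (p+1)) := by
  -- helper: the infinity edges
  have hinf : ∀ x : Zm t, x = k ∨ x = k - (t : Zm t) →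
      ∃ p : Fin (2*t+2), (none = rho t k p ∧ some x = rho t k (p+1)) ∨
        (some x = rho t k p ∧ none = rho t k (p+1)) := by
    intro x hx
    rcases hx with hxx | hxx
    · refine ⟨⟨0, by omega⟩, Or.inl ⟨(rho_zero t k _ rfl).symm, ?_⟩⟩
      rw [fin_succ t 0 (by omega), rho_succ_val]
      have hz : zig t 0 = 0 := by simpa using zig_even t 0
      rw [hz, add_zero, hxx]
    · refine ⟨⟨2*t+1, by omega⟩, Or.inr ⟨?_, ?_⟩⟩
      · have hmk : (⟨2*t+1, by omega⟩ : Fin (2*t+2)) = ⟨(2*t)+1, by omega⟩ := rfl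
        rw [hmk, rho_succ_val, zig_even, hxx]
        congr 1
        ring
      · rw [fin_wrap, rho_zero t k ⟨0, by omega⟩ rfl]
  -- helper: the "even sum" edges
  have heven : ∀ x y : Zm t, x ≠ y → x + y = 2*k →
      ∃ p : Fin (2*t+2), (some x = rho t k p ∧ some y = rho t k (p+1)) ∨
        (some y = rho t k p ∧ some x = rho t k (p+1)) := by
    intro x y hne hsum
    set d := x - k with hd
    have hx : x = k + d := by rw [hd]; ring
    have hy : y = k - d := by rw [hd]; linear_combination hsum
    have hd0 : d ≠ 0 := by
      intro hc
      apply hne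
      rw [hx, hy, hc]; ring
    have hdval : 1 ≤ d.val := by
      rcases Nat.eq_zero_or_pos d.val with h0 | h0
      · exact absurd (val_inj t (by rw [h0]; simp)) hd0
      · exact h0
    rcases le_or_gt d.val t with hle | hgt
    · obtain ⟨e1, e2⟩ := pos_pair_even t k d hdval hle
      refine ⟨⟨2*d.val, by omega⟩, Or.inl ⟨by rw [e1, hx], ?_⟩⟩
      rw [fin_succ t (2*d.val) (by omega), e2, hy]
    · -- use -d
      have hv := val_lt t d
      have hnegval : (-d).val = 2*t+1 - d.val := by
        rw [ZMod.neg_val, if_neg hd0]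
      have h1 : 1 ≤ (-d).val := by omega
      have h2 : (-d).val ≤ t := by omega
      obtain ⟨e1, e2⟩ := pos_pair_even t k (-d) h1 h2
      refine ⟨⟨2*(-d).val, by omega⟩, Or.inr ⟨by rw [e1, hy]; congr 1; ring, ?_⟩⟩
      rw [fin_succ t (2*(-d).val) (by omega), e2, hx]
      congr 1
      ring
  -- helper: the "odd sum" edges
  have hodd : ∀ x y : Zm t, x ≠ y → x + y = 2*k+1 →
      ∃ p : Fin (2*t+2), (some x = rho t k p ∧ some y = rho t k (p+1)) ∨
        (some y = rho t k p ∧ some x = rho t k (p+1)) := by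
    intro x y hne hsum
    -- wlog the element with val in [1,t] : d := x - k or y - k, d + e = 1
    have main : ∀ x y : Zm t, x + y = 2*k+1 → 1 ≤ (x-k).val → (x-k).val ≤ t →
        ∃ p : Fin (2*t+2), (some y = rho t k p ∧ some x = rho t k (p+1)) := by
      intro x y hsum h1 h2
      set d := x - k with hd
      have hx : x = k + d := by rw [hd]; ring
      have hy : y = k + 1 - d := by rw [hd]; linear_combination hsum
      obtain ⟨e1, e2⟩ := pos_pair_odd t k d h1 h2
      refine ⟨⟨2*d.val-1, by omega⟩, by rw [e1, hy], ?_⟩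
      rw [fin_succ t (2*d.val-1) (by omega)]
      have hmk : (⟨2*d.val-1+1, by omega⟩ : Fin (2*t+2)) = ⟨2*d.val, by omega⟩ :=
        Fin.ext (by simp; omega)
      rw [hmk, e2, hx]
    set d := x - k with hd
    set e := y - k with he
    have hde : d + e = 1 := by rw [hd, he]; linear_combination hsum
    have hdvne : d ≠ e := by
      intro hc
      apply hne
      rw [hd] at hc
      rw [he] at hc
      have : x = y := by linear_combination hc
      exact this
    -- one of d, e has val in [1, t]
    have hvd := val_lt t d
    have hve := val_lt t e
    have hcase : (1 ≤ d.val ∧ d.val ≤ t) ∨ (1 ≤ e.val ∧ e.val ≤ t) := by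
      by_contra hcon
      push_neg at hcon
      obtain ⟨hc1, hc2⟩ := hcon
      have hd01 : d.val = 0 ∨ t + 1 ≤ d.val := by
        rcases Nat.eq_zero_or_pos d.val with h | h
        · exact Or.inl h
        · exact Or.inr (by have := hc1 h; omega)
      have he01 : e.val = 0 ∨ t + 1 ≤ e.val := by
        rcases Nat.eq_zero_or_pos e.val with h | h
        · exact Or.inl h
        · exact Or.inr (by have := hc2 h; omega)
      have hone : (1 : Zm t).val = 1 := by
        have := natval t 1 (by omega)
        simpa using this
      rcases hd01 with h | h
      · have hd0 : d = 0 := val_inj t (by rw [ZMod.val_zero]; exact h)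
        have he1 : e = 1 := by linear_combination hde - hd0
        have : e.val = 1 := by rw [he1]; exact hone
        omega
      rcases he01 with h' | h'
      · have he0 : e = 0 := val_inj t (by rw [ZMod.val_zero]; exact h')
        have hd1 : d = 1 := by linear_combination hde - he0
        have : d.val = 1 := by rw [hd1]; exact hone
        omega
      · have hva : (d + e).val = 1 := by rw [hde]; exact hone
        rw [ZMod.val_add] at hva
        have hvd' := val_lt t d
        have hve' := val_lt t e
        rw [Nat.mod_eq_sub_mod (by omega), Nat.mod_eq_of_lt (by omega)] at hva
        have hsum2 : d.val + e.val = 2*t + 2 := by omega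
        have : d.val = t + 1 ∧ e.val = t + 1 := by omega
        exact hdvne (val_inj t (by omega))
    rcases hcase with ⟨h1, h2⟩ | ⟨h1, h2⟩
    · obtain ⟨p, hp⟩ := main x y hsum h1 h2
      exact ⟨p, Or.inr hp⟩
    · obtain ⟨p, hp⟩ := main y x (by linear_combination hsum) h1 h2
      exact ⟨p, Or.inl hp⟩
  rw [wg_adj] at h
  obtain ⟨hne, hr⟩ := h
  rcases hr with hr | hr
  · cases a with
    | none =>
      cases b with
      | none => simp [R] at hr
      | some x =>
        obtain ⟨p, hp⟩ := hinf x hr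
        rcases hp with ⟨h1, h2⟩ | ⟨h1, h2⟩
        · exact ⟨p, Or.inl ⟨h1, h2⟩⟩
        · exact ⟨p, Or.inr ⟨h1, h2⟩⟩
    | some x =>
      cases b with
      | none => simp [R] at hr
      | some y =>
        rcases hr with hsum | hsum
        · obtain ⟨p, hp⟩ := heven x y (by simpa using hne) hsum
          rcases hp with ⟨u1, u2⟩ | ⟨u1, u2⟩
          · exact ⟨p, Or.inl ⟨u1, u2⟩⟩
          · exact ⟨p, Or.inr ⟨u1, u2⟩⟩
        · obtain ⟨p, hp⟩ := hodd x y (by simpa using hne) hsum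
          rcases hp with ⟨u1, u2⟩ | ⟨u1, u2⟩
          · exact ⟨p, Or.inl ⟨u1, u2⟩⟩
          · exact ⟨p, Or.inr ⟨u1, u2⟩⟩
  · cases a with
    | none =>
      cases b with
      | none => simp [R] at hr
      | some x => simp [R] at hr
    | some x =>
      cases b with
      | none =>
        obtain ⟨p, hp⟩ := hinf x hr
        rcases hp with ⟨h1, h2⟩ | ⟨h1, h2⟩
        · exact ⟨p, Or.inr ⟨h1, h2⟩⟩
        · exact ⟨p, Or.inl ⟨h1, h2⟩⟩
      | some y =>
        rcases hr with hsum | hsum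
        · obtain ⟨p, hp⟩ := heven y x (by simpa using hne.symm) hsum
          rcases hp with ⟨u1, u2⟩ | ⟨u1, u2⟩
          · exact ⟨p, Or.inr ⟨u1, u2⟩⟩
          · exact ⟨p, Or.inl ⟨u1, u2⟩⟩
        · obtain ⟨p, hp⟩ := hodd y x (by simpa using hne.symm) hsum
          rcases hp with ⟨u1, u2⟩ | ⟨u1, u2⟩
          · exact ⟨p, Or.inr ⟨u1, u2⟩⟩
          · exact ⟨p, Or.inl ⟨u1, u2⟩⟩

end Walecki

open SimpleGraph

namespace Walecki

variable (t : ℕ)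

lemma ki_sub_t (i : ℕ) : ((i : ℕ) : Zm t) - (t : Zm t) = ((i + t + 1 : ℕ) : Zm t) := by
  have := m_zero t
  push_cast at this ⊢
  linear_combination -this

lemma val_neg_one (ht : 1 ≤ t) : (-1 : Zm t).val = 2*t := by
  rw [← two_t]
  exact natval t (2*t) (by omega)

/-- value of x under `x = ki ∨ x = ki - t` -/
lemma inf_val (i : ℕ) (hi : i < t) (x : Zm t)
    (h : x = ((i:ℕ) : Zm t) ∨ x = ((i:ℕ) : Zm t) - (t : Zm t)) :
    x.val = i ∨ x.val = i + t + 1 := by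
  rcases h with h | h
  · left; rw [h]; exact natval t i (by omega)
  · right; rw [h, ki_sub_t]; exact natval t (i+t+1) (by omega)

lemma sum_val (i : ℕ) (hi : i < t) (x y : Zm t)
    (h : x + y = 2*((i:ℕ) : Zm t) ∨ x + y = 2*((i:ℕ) : Zm t)+1) :
    (x+y).val = 2*i ∨ (x+y).val = 2*i+1 := by
  rcases h with h | h
  · left
    rw [h, show 2*((i:ℕ) : Zm t) = ((2*i : ℕ) : Zm t) by push_cast; ring]
    exact natval t (2*i) (by omega)
  · right
    rw [h, show 2*((i:ℕ) : Zm t)+1 = ((2*i+1 : ℕ) : Zm t) by push_cast; ring]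
    exact natval t (2*i+1) (by omega)

lemma wg_wg_disj (i j : ℕ) (hi : i < t) (hj : j < t) (hij : i ≠ j) (a b : V t) :
    ¬((WG t ((i:ℕ) : Zm t)).Adj a b ∧ (WG t ((j:ℕ) : Zm t)).Adj a b) := by
  rintro ⟨h1, h2⟩
  rw [wg_adj] at h1 h2
  obtain ⟨hne, hr1⟩ := h1
  obtain ⟨-, hr2⟩ := h2
  cases a with
  | none =>
    cases b with
    | none => simp [R] at hr1
    | some x =>
      have e1 : x = ((i:ℕ) : Zm t) ∨ x = ((i:ℕ) : Zm t) - (t : Zm t) := by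
        rcases hr1 with hr | hr
        · exact hr
        · simp [R] at hr
      have e2 : x = ((j:ℕ) : Zm t) ∨ x = ((j:ℕ) : Zm t) - (t : Zm t) := by
        rcases hr2 with hr | hr
        · exact hr
        · simp [R] at hr
      have v1 := inf_val t i hi x e1
      have v2 := inf_val t j hj x e2
      omega
  | some x =>
    cases b with
    | none =>
      have e1 : x = ((i:ℕ) : Zm t) ∨ x = ((i:ℕ) : Zm t) - (t : Zm t) := by
        rcases hr1 with hr | hr
        · simp [R] at hr
        · exact hr
      have e2 : x = ((j:ℕ) : Zm t) ∨ x = ((j:ℕ) : Zm t) - (t : Zm t) := by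
        rcases hr2 with hr | hr
        · simp [R] at hr
        · exact hr
      have v1 := inf_val t i hi x e1
      have v2 := inf_val t j hj x e2
      omega
    | some y =>
      have e1 : x + y = 2*((i:ℕ) : Zm t) ∨ x + y = 2*((i:ℕ) : Zm t)+1 := by
        rcases hr1 with hr | hr
        · exact hr
        · rcases hr with hr | hr
          · left; linear_combination hr
          · right; linear_combination hr
      have e2 : x + y = 2*((j:ℕ) : Zm t) ∨ x + y = 2*((j:ℕ) : Zm t)+1 := by
        rcases hr2 with hr | hr
        · exact hr
        · rcases hr with hr | hr
          · left; linear_combination hr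
          · right; linear_combination hr
      have v1 := sum_val t i hi x y e1
      have v2 := sum_val t j hj x y e2
      omega

lemma wg_mg_disj (ht : 1 ≤ t) (i : ℕ) (hi : i < t) (a b : V t) :
    ¬((WG t ((i:ℕ) : Zm t)).Adj a b ∧ (MG t).Adj a b) := by
  rintro ⟨h1, h2⟩
  rw [wg_adj] at h1
  rw [MG_adj] at h2
  obtain ⟨hne, hr1⟩ := h1
  cases a with
  | none =>
    -- b = mu none = some t
    have hb : b = some ((t:ℕ) : Zm t) := h2
    subst hb
    have e1 : ((t:ℕ) : Zm t) = ((i:ℕ) : Zm t) ∨ ((t:ℕ) : Zm t) = ((i:ℕ) : Zm t) - (t : Zm t) := by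
      rcases hr1 with hr | hr
      · exact hr
      · simp [R] at hr
    have v1 := inf_val t i hi _ e1
    rw [natval t t (by omega)] at v1
    omega
  | some x =>
    by_cases hx : x = ((t:ℕ) : Zm t)
    · -- b = none
      have hb : b = none := by rw [h2, mu, if_pos hx]
      subst hb
      have e1 : x = ((i:ℕ) : Zm t) ∨ x = ((i:ℕ) : Zm t) - (t : Zm t) := by
        rcases hr1 with hr | hr
        · simp [R] at hr
        · exact hr
      have v1 := inf_val t i hi x e1
      rw [hx, natval t t (by omega)] at v1
      omega
    · have hb : b = some (-1 - x) := by rw [h2, mu, if_neg hx]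
      subst hb
      have e1 : x + (-1-x) = 2*((i:ℕ) : Zm t) ∨ x + (-1-x) = 2*((i:ℕ) : Zm t)+1 := by
        rcases hr1 with hr | hr
        · exact hr
        · rcases hr with hr | hr
          · left; linear_combination hr
          · right; linear_combination hr
      have v1 := sum_val t i hi _ _ e1
      have hm1 : x + (-1 - x) = -1 := by ring
      rw [hm1, val_neg_one t ht] at v1
      omega

lemma cover (ht : 1 ≤ t) (a b : V t) (hne : a ≠ b) :
    (MG t).Adj a b ∨ ∃ i : Fin t, (WG t ((i.val:ℕ) : Zm t)).Adj a b := by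
  cases a with
  | none =>
    cases b with
    | none => exact absurd rfl hne
    | some x =>
      have hv := val_lt t x
      rcases Nat.lt_or_ge x.val t with hlt | hge
      · -- cycle i = x.val
        right
        refine ⟨⟨x.val, hlt⟩, ?_⟩
        rw [wg_adj]
        exact ⟨by simp, Or.inl (Or.inl (by rw [valnat]))⟩
      rcases Nat.eq_or_lt_of_le hge with heq | hgt
      · -- matching edge
        left
        rw [MG_adj]
        show some x = some ((t:ℕ) : Zm t)
        congr 1
        apply val_inj
        rw [natval t t (by omega)]
        omega
      · -- cycle i = x.val - t - 1
        right
        refine ⟨⟨x.val - t - 1, by omega⟩, ?_⟩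
        rw [wg_adj]
        refine ⟨by simp, Or.inl (Or.inr ?_)⟩
        rw [ki_sub_t]
        have : x.val - t - 1 + t + 1 = x.val := by omega
        rw [this, valnat]
  | some x =>
    cases b with
    | none =>
      have hv := val_lt t x
      rcases Nat.lt_or_ge x.val t with hlt | hge
      · right
        refine ⟨⟨x.val, hlt⟩, ?_⟩
        rw [wg_adj]
        exact ⟨by simp, Or.inr (Or.inl (by rw [valnat]))⟩
      rcases Nat.eq_or_lt_of_le hge with heq | hgt
      · left
        rw [MG_adj]
        have hx : x = ((t:ℕ) : Zm t) := by
          apply val_inj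
          rw [natval t t (by omega)]
          omega
        show none = mu t (some x)
        rw [mu, if_pos hx]
      · right
        refine ⟨⟨x.val - t - 1, by omega⟩, ?_⟩
        rw [wg_adj]
        refine ⟨by simp, Or.inr (Or.inr ?_)⟩
        rw [ki_sub_t]
        have : x.val - t - 1 + t + 1 = x.val := by omega
        rw [this, valnat]
    | some y =>
      have hxy : x ≠ y := fun h => hne (by rw [h])
      set s := x + y with hs
      have hv := val_lt t s
      rcases Nat.eq_or_lt_of_le (by omega : s.val ≤ 2*t) with heq | hlt
      · -- s = -1 : matching
        left
        rw [MG_adj]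
        have hsm : s = -1 := by
          apply val_inj
          rw [val_neg_one t ht]
          omega
        have hxt : x ≠ ((t:ℕ) : Zm t) := by
          intro hc
          apply hxy
          apply two_mul_cancel t
          have h2t := two_t t
          push_cast at h2t
          have : y = -1 - x := by rw [hs] at hsm; linear_combination hsm
          rw [this, hc]
          linear_combination 2*h2t
        show some y = mu t (some x)
        rw [mu, if_neg hxt]
        congr 1
        rw [hs] at hsm
        linear_combination hsm
      · right
        refine ⟨⟨s.val / 2, by omega⟩, ?_⟩
        rw [wg_adj]
        refine ⟨by simpa using hxy, Or.inl ?_⟩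
        show x + y = _ ∨ x + y = _
        rcases Nat.even_or_odd s.val with ⟨c, hc⟩ | ⟨c, hc⟩
        · left
          have hdiv : s.val / 2 = c := by omega
          show x + y = 2*((s.val / 2 : ℕ) : Zm t)
          rw [hdiv, ← hs, show 2*((c:ℕ) : Zm t) = ((2*c : ℕ) : Zm t) by push_cast; ring,
            show 2*c = s.val by omega, valnat]
        · right
          have hdiv : s.val / 2 = c := by omega
          show x + y = 2*((s.val / 2 : ℕ) : Zm t)+1
          rw [hdiv, ← hs, show 2*((c:ℕ) : Zm t)+1 = ((2*c+1 : ℕ) : Zm t) by push_cast; ring,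
            show 2*c+1 = s.val by omega, valnat]

end Walecki

open SimpleGraph

namespace Walecki

lemma card_eq (s : ℕ) : Fintype.card (Fin (2*s+4)) = Fintype.card (V (s+1)) := by
  rw [Fintype.card_fin, Fintype.card_option, ZMod.card]
  omega

lemma main (s : ℕ) :
    ∃ (F : Fin (s+1) → SimpleGraph (Fin (2*s+4))) (M : SimpleGraph (Fin (2*s+4))),
      (∀ i, ∃ (u : Fin (2*s+4)) (c : (F i).Walk u u),
        c.IsHamiltonianCycle ∧ ∀ e ∈ (F i).edgeSet, e ∈ c.edges) ∧
      (∀ x : Fin (2*s+4), (M.neighborSet x).ncard = 1) ∧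
      (∀ i j, i ≠ j → Disjoint ((F i).edgeSet) ((F j).edgeSet)) ∧
      (∀ i, Disjoint ((F i).edgeSet) M.edgeSet) ∧
      M ⊔ (⨆ i, F i) = (⊤ : SimpleGraph (Fin (2*s+4))) := by
  set t := s + 1 with hts
  have ht : 1 ≤ t := by omega
  let e : Fin (2*s+4) ≃ V t := Fintype.equivOfCardEq (card_eq s)
  let kk : Fin (s+1) → Zm t := fun i => ((i.val : ℕ) : Zm t)
  refine ⟨fun i => (WG t (kk i)).comap e, (MG t).comap e, ?_, ?_, ?_, ?_, ?_⟩
  · -- Hamiltonian cycles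
    intro i
    obtain ⟨c₀, hc₀, hcov⟩ := cycleGraph_ham (2*s+1)
    let f : Fin (2*t+2) → Fin (2*s+4) := fun p => e.symm (rho t (kk i) p)
    have hrel : ∀ {p q : Fin (2*s+4)}, (cycleGraph (2*s+1+3)).Adj p q →
        ((WG t (kk i)).comap e).Adj (f p) (f q) := by
      intro p q hpq
      have hadj : ∀ p : Fin (2*t+2), ((WG t (kk i)).comap e).Adj (f p) (f (p+1)) := by
        intro p
        simp only [comap_adj, f, Equiv.apply_symm_apply]
        exact rho_forward t (kk i) p
      have h2 := (cycleGraph_adj (n := 2*s+2) (u := p) (v := q)).mp hpq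
      rcases h2 with h2 | h2
      · have : p = q + 1 := by
          rw [← h2]; ring
        rw [this]
        exact (hadj q).symm
      · have : q = p + 1 := by
          rw [← h2]; ring
        rw [this]
        exact hadj p
    let hom : cycleGraph (2*s+1+3) →g (WG t (kk i)).comap e := ⟨f, hrel⟩
    have hbij : Function.Bijective f :=
      (Equiv.bijective e.symm).comp (rho_bij t (kk i))
    refine ⟨f 0, c₀.map hom, hc₀.map (f := hom) hbij, ?_⟩
    intro ed hed
    induction ed with
    | _ a b =>
      rw [mem_edgeSet, comap_adj] at hed
      obtain ⟨p, hp⟩ := edge_back t ht (kk i) (e a) (e b) hed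
      let q : Fin (2*s+1+3) := p
      have hmem : s(f p, f (p+1)) ∈ (c₀.map hom).edges := by
        rw [SimpleGraph.Walk.edges_map]
        exact List.mem_map.mpr ⟨s(q, q+1), hcov q, Sym2.map_pair_eq _ _ _⟩
      rcases hp with ⟨h1, h2⟩ | ⟨h1, h2⟩
      · have ha : a = f p := by rw [show f p = e.symm (rho t (kk i) p) from rfl, ← h1]; simp
        have hb : b = f (p+1) := by
          rw [show f (p+1) = e.symm (rho t (kk i) (p+1)) from rfl, ← h2]; simp
        rw [ha, hb]
        exact hmem
      · have hb : b = f p := by rw [show f p = e.symm (rho t (kk i) p) from rfl, ← h1]; simp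
        have ha : a = f (p+1) := by
          rw [show f (p+1) = e.symm (rho t (kk i) (p+1)) from rfl, ← h2]; simp
        rw [ha, hb, Sym2.eq_swap]
        exact hmem
  · -- matching degrees
    intro x
    have hset : ((MG t).comap e).neighborSet x = {e.symm (mu t (e x))} := by
      ext y
      simp only [mem_neighborSet, comap_adj, Set.mem_singleton_iff]
      rw [MG_adj, Equiv.eq_symm_apply]
    rw [hset, Set.ncard_singleton]
  · -- pairwise disjoint
    intro i j hij
    rw [Set.disjoint_left]
    intro ed h1 h2
    induction ed with
    | _ a b =>
      rw [mem_edgeSet, comap_adj] at h1 h2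
      exact wg_wg_disj t i.val j.val i.isLt j.isLt (fun h => hij (Fin.ext h)) (e a) (e b) ⟨h1, h2⟩
  · -- disjoint from matching
    intro i
    rw [Set.disjoint_left]
    intro ed h1 h2
    induction ed with
    | _ a b =>
      rw [mem_edgeSet, comap_adj] at h1 h2
      exact wg_mg_disj t ht i.val i.isLt (e a) (e b) ⟨h1, h2⟩
  · -- union is complete
    ext a b
    simp only [sup_adj, iSup_adj, comap_adj, top_adj]
    constructor
    · rintro (h | ⟨i, h⟩)
      · intro hc
        exact h.ne (by rw [hc])
      · intro hc
        exact h.ne (by rw [hc])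
    · intro hne
      have := cover t ht (e a) (e b) (e.injective.ne hne)
      rcases this with h | ⟨i, h⟩
      · exact Or.inl h
      · exact Or.inr ⟨i, h⟩

end Walecki

/-- if `v` is even, then `K_v` decomposes into `(v-2)/2` Hamiltonian
cycles and one perfect matching. -/
theorem stmt_16 (v : ℕ) (hv : Even v) :
    ∃ (F : Fin ((v - 2) / 2) → SimpleGraph (Fin v)) (M : SimpleGraph (Fin v)),
      (∀ i, ∃ (u : Fin v) (c : (F i).Walk u u),
        c.IsHamiltonianCycle ∧ ∀ e ∈ (F i).edgeSet, e ∈ c.edges) ∧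
      (∀ x : Fin v, (M.neighborSet x).ncard = 1) ∧
      (∀ i j, i ≠ j → Disjoint ((F i).edgeSet) ((F j).edgeSet)) ∧
      (∀ i, Disjoint ((F i).edgeSet) M.edgeSet) ∧
      M ⊔ (⨆ i, F i) = (⊤ : SimpleGraph (Fin v)) := by
  obtain ⟨u, rfl⟩ := hv
  match u with
  | 0 =>
    refine ⟨fun i => ⊥, ⊥, ?_, ?_, ?_, ?_, ?_⟩
    · intro i; exact i.elim0
    · intro x; exact x.elim0
    · intro i; exact i.elim0
    · intro i; exact i.elim0
    · ext a b; exact a.elim0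
  | 1 =>
    refine ⟨fun i => ⊥, ⊤, ?_, ?_, ?_, ?_, ?_⟩
    · intro i; exact i.elim0
    · intro x
      have hd : ∀ x y : Fin 2, ((⊤ : SimpleGraph (Fin 2)).Adj x y ↔ y = x + 1) := by decide
      have : (⊤ : SimpleGraph (Fin 2)).neighborSet x = {x + 1} := by
        ext y
        simp only [SimpleGraph.mem_neighborSet, Set.mem_singleton_iff]
        exact hd x y
      rw [this, Set.ncard_singleton]
    · intro i; exact i.elim0
    · intro i; exact i.elim0
    · rw [top_sup_eq]
  | (k+2) =>
    have hv2 : (k+2)+(k+2) = 2*k+4 := by omega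
    rw [hv2, show (2*k+4-2)/2 = k+1 from by omega]
    exact Walecki.main k
end
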